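/- arXiv:1806.06648 — 2 statements merged into one kernel-verified Lean document; each statement's English description precedes it below -/
import Mathlib

section
/- Let $\sigma^2\ge0$, let $w:\mathbb{R}\to\mathbb{R}$ be an even bounded $C^1$ function, let $b:\mathbb{R}\to\mathbb{R}$ be an odd bounded $C^1$ function, and let $c_0:\mathbb{R}\to\mathbb{R}$ be a bounded $C^1$ function. Let $f:\mathbb{R}^2\times[0,T]\to[0,\infty)$ be continuously differentiable in all variables, twice continuously differentiable in $(\rho,R)$, and suppose there is a compact set $K\subset\mathbb{R}^2$ with $\operatorname{supp} f(\cdot,\cdot,t)\subseteq K$ for all $t\in[0,T]$. Define $a[f](\rho,R,t)=\int_{\mathbb{R}^2}w(R-R')\big(b(\rho-\rho')-b(R-R')\big)f(\rho',R',t)\,d\rho'\,dR'$, $c[f](\rho,R,t)=\int_{\mathbb{R}^2}w(R-R')\,c_0(\rho'-\rho)\,f(\rho',R',t)\,d\rho'\,dR'$ and $d[f](R,t)=\int_{\mathbb{R}^2}w(R-R')f(\rho',R',t)\,d\rho'\,dR'$, and assume $f$ satisfies pointwise on $\mathbb{R}^2\times(0,T)$ the Fokker-Planck equation $\partial_t f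 = -\partial_R(a[f]f) - \partial_\rho(c[f]f) + \tfrac{\sigma^2}{2}\,d[f]\,\partial^2_\rho f$. Then $t\mapsto \int_{\mathbb{R}^2} R\, f(\rho,R,t)\,d\rho\,dR$ is constant on $[0,T]$. -/
open MeasureTheory Filter Metric

namespace EloAux

lemma hasDerivAt_fst {Y : Type*} [NormedAddCommGroup Y] [NormedSpace ℝ Y]
    (u : ℝ × Y → ℝ) (hu : Differentiable ℝ u) (ρ : ℝ) (y : Y) :
    HasDerivAt (fun p => u (p, y)) (fderiv ℝ u (ρ, y) (1, 0)) ρ :=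
  (hu (ρ, y)).hasFDerivAt.comp_hasDerivAt ρ ((hasDerivAt_id ρ).prodMk (hasDerivAt_const ρ y))

lemma hasDerivAt_snd (u : ℝ × ℝ → ℝ) (hu : Differentiable ℝ u) (ρ R : ℝ) :
    HasDerivAt (fun r => u (ρ, r)) (fderiv ℝ u (ρ, R) (0, 1)) R :=
  (hu (ρ, R)).hasFDerivAt.comp_hasDerivAt R ((hasDerivAt_const R ρ).prodMk (hasDerivAt_id R))

lemma hasDerivAt_time (u : ℝ × ℝ × ℝ → ℝ) (hu : Differentiable ℝ u) (ρ R t : ℝ) :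
    HasDerivAt (fun s => u (ρ, R, s)) (fderiv ℝ u (ρ, R, t) (0, 0, 1)) t :=
  (hu _).hasFDerivAt.comp_hasDerivAt t
    ((hasDerivAt_const t ρ).prodMk ((hasDerivAt_const t R).prodMk (hasDerivAt_id t)))

lemma integrable_indicator_compact {K : Set (ℝ × ℝ)} (hK : IsCompact K) (C : ℝ) :
    Integrable (K.indicator fun _ => C) := by
  rw [integrable_indicator_iff hK.isClosed.measurableSet]
  exact integrableOn_const hK.measure_lt_top.ne

/-- Continuity of a parametric integral against a compactly supported density. -/
lemma continuous_param_integral {P : Type*} [NormedAddCommGroup P] [NormedSpace ℝ P]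
    [ProperSpace P]
    (g : P → (ℝ × ℝ) → ℝ) (hg : Continuous fun q : P × (ℝ × ℝ) => g q.1 q.2)
    (h : ℝ × ℝ → ℝ) (hh : Continuous h)
    (K : Set (ℝ × ℝ)) (hK : IsCompact K) (hsupp : ∀ y, y ∉ K → h y = 0) :
    Continuous fun p : P => ∫ y : ℝ × ℝ, g p y * h y := by
  rw [continuous_iff_continuousAt]; intro p₀
  obtain ⟨C, hC⟩ := ((isCompact_closedBall p₀ 1).prod hK).exists_bound_of_continuousOn
      (Continuous.continuousOn (hg.mul (hh.comp continuous_snd)))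
  apply tendsto_integral_filter_of_dominated_convergence
      (K.indicator fun _ => max C 0)
  · exact Eventually.of_forall fun p =>
      ((hg.comp (continuous_const.prodMk continuous_id)).mul hh).aestronglyMeasurable
  · refine eventually_of_mem (closedBall_mem_nhds p₀ one_pos) fun p hp => ?_
    refine ae_of_all _ fun y => ?_
    by_cases hy : y ∈ K
    · rw [Set.indicator_of_mem hy]
      exact le_max_of_le_left (hC (p, y) ⟨hp, hy⟩)
    · rw [Set.indicator_of_notMem hy, hsupp y hy]
      simp
  · exact integrable_indicator_compact hK _
  · exact ae_of_all _ fun y =>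
      ((hg.comp (continuous_id.prodMk continuous_const)).mul continuous_const).tendsto p₀

/-- Differentiation under the integral sign against a compactly supported density. -/
lemma hasDerivAt_param_integral (g g' : ℝ → (ℝ × ℝ) → ℝ)
    (hg : Continuous fun q : ℝ × (ℝ × ℝ) => g q.1 q.2)
    (hg' : Continuous fun q : ℝ × (ℝ × ℝ) => g' q.1 q.2)
    (hd : ∀ y r, HasDerivAt (fun s => g s y) (g' r y) r)
    (h : ℝ × ℝ → ℝ) (hh : Continuous h)
    (K : Set (ℝ × ℝ)) (hK : IsCompact K) (hsupp : ∀ y, y ∉ K → h y = 0)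
    (r₀ : ℝ) :
    HasDerivAt (fun r => ∫ y : ℝ × ℝ, g r y * h y) (∫ y : ℝ × ℝ, g' r₀ y * h y) r₀ := by
  obtain ⟨C, hC⟩ := ((isCompact_closedBall r₀ 1).prod hK).exists_bound_of_continuousOn
      (Continuous.continuousOn (hg'.mul (hh.comp continuous_snd)))
  have key := hasDerivAt_integral_of_dominated_loc_of_deriv_le (μ := volume)
      (F := fun r (y : ℝ × ℝ) => g r y * h y) (F' := fun r (y : ℝ × ℝ) => g' r y * h y)
      (bound := K.indicator fun _ => max C 0) (x₀ := r₀) (ball_mem_nhds r₀ one_pos)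
      (Eventually.of_forall fun r =>
        ((hg.comp (continuous_const.prodMk continuous_id)).mul hh).aestronglyMeasurable)
      ?_ ?_ ?_ (integrable_indicator_compact hK _) ?_
  · exact key.2
  · -- Integrable (F r₀)
    refine Continuous.integrable_of_hasCompactSupport
      ((hg.comp (continuous_const.prodMk continuous_id)).mul hh)
      (HasCompactSupport.intro hK fun y hy => ?_)
    show g r₀ y * h y = 0
    rw [hsupp y hy, mul_zero]
  · exact ((hg'.comp (continuous_const.prodMk continuous_id)).mul hh).aestronglyMeasurable
  · refine ae_of_all _ fun y r hr => ?_
    by_cases hy : y ∈ K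
    · rw [Set.indicator_of_mem hy]
      exact le_max_of_le_left (hC (r, y) ⟨ball_subset_closedBall hr, hy⟩)
    · show ‖g' r y * h y‖ ≤ _
      rw [Set.indicator_of_notMem hy, hsupp y hy]
      simp
  · exact ae_of_all _ fun y r _ => (hd y r).mul_const (h y)

/-- A function vanishing for `M ≤ |r|` has vanishing derivative for `M < |r|`. -/
lemma deriv_zero_outside {u : ℝ → ℝ} {M : ℝ} (hs : ∀ r, M ≤ |r| → u r = 0)
    {r : ℝ} (hr : M < |r|) : deriv u r = 0 := by
  have hopen : IsOpen {x : ℝ | M < |x|} := isOpen_lt continuous_const continuous_abs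
  have hmem : {x : ℝ | M < |x|} ∈ nhds r := hopen.mem_nhds hr
  have : u =ᶠ[nhds r] fun _ => 0 :=
    eventually_of_mem hmem fun x hx => hs x (le_of_lt hx)
  rw [this.deriv_eq, deriv_const]

lemma integral_eq_interval (v : ℝ → ℝ) (M : ℝ) (hM : 0 < M)
    (hs : ∀ r, M < |r| → v r = 0) :
    (∫ r, v r) = ∫ r in (-(M+1))..(M+1), v r := by
  rw [intervalIntegral.integral_of_le (by linarith), ← setIntegral_eq_integral_of_forall_compl_eq_zero
      (s := Set.Ioc (-(M+1)) (M+1)) (fun x hx => ?_)]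
  refine hs x ?_
  simp only [Set.mem_Ioc, not_and_or, not_lt, not_le] at hx
  rcases hx with hx | hx
  · rw [abs_of_nonpos (by linarith)]; linarith
  · rw [abs_of_pos (by linarith)]; linarith

/-- Integration by parts: `∫ r * u' = - ∫ u` for compactly supported `u`. -/
lemma integral_id_mul_deriv (u u' : ℝ → ℝ) (hu : ∀ r, HasDerivAt u (u' r) r)
    (hu'c : Continuous u') (M : ℝ) (hM : 0 < M) (hs : ∀ r, M ≤ |r| → u r = 0) :
    (∫ r, r * u' r) = - ∫ r, u r := by
  have hu'0 : ∀ r, M < |r| → u' r = 0 := fun r hr => by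
    rw [← (hu r).deriv]; exact deriv_zero_outside hs hr
  have huc : Continuous u := by
    rw [continuous_iff_continuousAt]; exact fun r => (hu r).differentiableAt.continuousAt
  have hub : ∀ r, M + 1 ≤ |r| → u r = 0 := fun r hr => hs r (by linarith)
  have key := intervalIntegral.integral_mul_deriv_eq_deriv_mul
      (a := -(M+1)) (b := M+1)
      (u := fun x : ℝ => x) (u' := fun _ => (1:ℝ)) (v := u) (v' := u')
      (fun x _ => hasDerivAt_id x) (fun x _ => hu x)
      intervalIntegrable_const (hu'c.intervalIntegrable _ _)
  rw [integral_eq_interval (fun r => r * u' r) M hM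
      (fun r hr => by show r * u' r = 0; rw [hu'0 r hr, mul_zero]),
    integral_eq_interval u M hM (fun r hr => hs r hr.le), key]
  have h1 : u (M+1) = 0 := hs _ (by rw [abs_of_pos (by linarith)]; linarith)
  have h2 : u (-(M+1)) = 0 := hs _ (by rw [abs_of_nonpos (by linarith)]; linarith)
  rw [h1, h2]
  simp

/-- `∫ u' = 0` for compactly supported `u`. -/
lemma integral_deriv_eq_zero (u u' : ℝ → ℝ) (hu : ∀ r, HasDerivAt u (u' r) r)
    (hu'c : Continuous u') (M : ℝ) (hM : 0 < M) (hs : ∀ r, M ≤ |r| → u r = 0) :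
    (∫ r, u' r) = 0 := by
  have hu'0 : ∀ r, M < |r| → u' r = 0 := fun r hr => by
    rw [← (hu r).deriv]; exact deriv_zero_outside hs hr
  rw [integral_eq_interval u' M hM hu'0,
    intervalIntegral.integral_eq_sub_of_hasDerivAt (fun x _ => hu x)
      (hu'c.intervalIntegrable _ _)]
  have h1 : u (M+1) = 0 := hs _ (by rw [abs_of_pos (by linarith)]; linarith)
  have h2 : u (-(M+1)) = 0 := hs _ (by rw [abs_of_nonpos (by linarith)]; linarith)
  rw [h1, h2, sub_zero]


lemma fubini_fst (g : ℝ × ℝ → ℝ) (hg : Integrable g) :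
    (∫ x : ℝ × ℝ, g x) = ∫ ρ : ℝ, ∫ R : ℝ, g (ρ, R) := by
  rw [Measure.volume_eq_prod ℝ ℝ] at hg
  rw [show (volume : Measure (ℝ × ℝ)) = (volume : Measure ℝ).prod volume from
    Measure.volume_eq_prod ℝ ℝ]
  exact integral_prod g hg

lemma fubini_snd (g : ℝ × ℝ → ℝ) (hg : Integrable g) :
    (∫ x : ℝ × ℝ, g x) = ∫ R : ℝ, ∫ ρ : ℝ, g (ρ, R) := by
  rw [Measure.volume_eq_prod ℝ ℝ] at hg
  rw [show (volume : Measure (ℝ × ℝ)) = (volume : Measure ℝ).prod volume from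
    Measure.volume_eq_prod ℝ ℝ]
  exact integral_prod_symm g hg

lemma fubini_swap (Φ : (ℝ × ℝ) → (ℝ × ℝ) → ℝ)
    (hΦ : Integrable (fun z : (ℝ × ℝ) × (ℝ × ℝ) => Φ z.1 z.2)) :
    (∫ x : ℝ × ℝ, ∫ y : ℝ × ℝ, Φ x y) = ∫ y : ℝ × ℝ, ∫ x : ℝ × ℝ, Φ x y := by
  rw [Measure.volume_eq_prod (ℝ × ℝ) (ℝ × ℝ)] at hΦ
  exact integral_integral_swap hΦ

end EloAux
open EloAux in
/-- Conservation of the mean rating for classical, compactly supported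
solutions of the nonlinear nonlocal Fokker-Planck Elo equation
`∂ₜ f = -∂_R(a[f] f) - ∂_ρ(c[f] f) + (σ²/2) d[f] ∂²_ρ f`, with rating drift
`a[f]` built from the even kernel `w` and odd score function `b`, strength
drift `c[f]` built from a bounded learning kernel `c₀`, and diffusion
coefficient `(σ²/2) d[f]`. -/
theorem elo_fokker_planck_mean_rating_constant
    (σ2 T : ℝ) (hσ : 0 ≤ σ2) (hT : 0 < T)
    (w b c0 : ℝ → ℝ)
    (hw_even : ∀ z, w (-z) = w z) (hw_smooth : ContDiff ℝ 1 w)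
    (Cw : ℝ) (hw_bdd : ∀ z, |w z| ≤ Cw)
    (hb_odd : ∀ z, b (-z) = -b z) (hb_smooth : ContDiff ℝ 1 b)
    (Cb : ℝ) (hb_bdd : ∀ z, |b z| ≤ Cb)
    (hc0_smooth : ContDiff ℝ 1 c0) (Cc : ℝ) (hc0_bdd : ∀ z, |c0 z| ≤ Cc)
    (f : ℝ → ℝ → ℝ → ℝ)  -- arguments: ρ, R, t
    (hf_nonneg : ∀ ρ R t, 0 ≤ f ρ R t)
    (hf_C1 : ContDiff ℝ 1 (fun q : ℝ × ℝ × ℝ => f q.1 q.2.1 q.2.2))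
    (hf_C2 : ∀ t, ContDiff ℝ 2 (fun x : ℝ × ℝ => f x.1 x.2 t))
    (K : Set (ℝ × ℝ)) (hK : IsCompact K)
    (hsupp : ∀ t ∈ Set.Icc (0 : ℝ) T,
      Function.support (fun x : ℝ × ℝ => f x.1 x.2 t) ⊆ K)
    (hpde : ∀ (ρ R t : ℝ), 0 < t → t < T →
      deriv (fun s => f ρ R s) t
        = -(deriv (fun r =>
              (∫ y : ℝ × ℝ, w (r - y.2) * (b (ρ - y.1) - b (r - y.2)) *
                f y.1 y.2 t) * f ρ r t) R)
          - deriv (fun p =>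
              (∫ y : ℝ × ℝ, w (R - y.2) * c0 (y.1 - p) * f y.1 y.2 t) *
                f p R t) ρ
          + σ2 / 2 * (∫ y : ℝ × ℝ, w (R - y.2) * f y.1 y.2 t) *
              deriv (deriv (fun p => f p R t)) ρ) :
    ∀ t1 ∈ Set.Icc (0 : ℝ) T, ∀ t2 ∈ Set.Icc (0 : ℝ) T,
      (∫ x : ℝ × ℝ, x.2 * f x.1 x.2 t1) = ∫ x : ℝ × ℝ, x.2 * f x.1 x.2 t2 := by
  classical
  have hzero : ∀ t ∈ Set.Icc (0:ℝ) T, ∀ x : ℝ × ℝ, x ∉ K → f x.1 x.2 t = 0 := by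
    intro t ht x hx
    by_contra h
    exact hx (hsupp t ht (by simpa [Function.mem_support] using h))
  have hzeroC : ∀ t ∈ Set.Icc (0:ℝ) T, ∀ ρ R : ℝ, (ρ, R) ∉ K → f ρ R t = 0 :=
    fun t ht ρ R h => hzero t ht (ρ, R) h
  obtain ⟨M, hM1, hbox⟩ : ∃ M : ℝ, 1 ≤ M ∧ ∀ x : ℝ × ℝ, x ∈ K → |x.1| ≤ M ∧ |x.2| ≤ M := by
    obtain ⟨r, hr⟩ := hK.isBounded.subset_closedBall (0, 0)
    refine ⟨max r 1, le_max_right _ _, fun x hx => ?_⟩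
    have := hr hx
    simp only [Metric.mem_closedBall, Prod.dist_eq, Real.dist_eq, sub_zero, max_le_iff] at this
    exact ⟨this.1.trans (le_max_left _ _), this.2.trans (le_max_left _ _)⟩
  have hnotK1 : ∀ ρ R : ℝ, M + 1 ≤ |ρ| → (ρ, R) ∉ K := by
    intro ρ R h hmem
    have := (hbox _ hmem).1
    simp only at this
    linarith
  have hnotK2 : ∀ ρ R : ℝ, M + 1 ≤ |R| → (ρ, R) ∉ K := by
    intro ρ R h hmem
    have := (hbox _ hmem).2
    simp only at this
    linarith
  have hwc : Continuous w := hw_smooth.continuous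
  have hbc : Continuous b := hb_smooth.continuous
  have hc0c : Continuous c0 := hc0_smooth.continuous
  have hw'c : Continuous (deriv w) := hw_smooth.continuous_deriv le_rfl
  have hb'c : Continuous (deriv b) := hb_smooth.continuous_deriv le_rfl
  have hc0'c : Continuous (deriv c0) := hc0_smooth.continuous_deriv le_rfl
  have hwd : ∀ z, HasDerivAt w (deriv w z) z := fun z =>
    ((hw_smooth.differentiable one_ne_zero) z).hasDerivAt
  have hbd : ∀ z, HasDerivAt b (deriv b z) z := fun z =>
    ((hb_smooth.differentiable one_ne_zero) z).hasDerivAt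
  have hc0d : ∀ z, HasDerivAt c0 (deriv c0 z) z := fun z =>
    ((hc0_smooth.differentiable one_ne_zero) z).hasDerivAt
  have hKopen : IsOpen Kᶜ := hK.isClosed.isOpen_compl
  set F : ℝ → ℝ := fun t => ∫ x : ℝ × ℝ, x.2 * f x.1 x.2 t with hF
  have key : ∀ t, 0 < t → t < T → HasDerivAt F 0 t := by
    intro t ht0 htT
    have htI : t ∈ Set.Icc (0:ℝ) T := ⟨ht0.le, htT.le⟩
    have hftc : Continuous fun x : ℝ × ℝ => f x.1 x.2 t := (hf_C2 t).continuous
    have hft0 : ∀ y, y ∉ K → f y.1 y.2 t = 0 := fun y hy => hzero t htI y hy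
    have hftd : Differentiable ℝ fun x : ℝ × ℝ => f x.1 x.2 t :=
      (hf_C2 t).differentiable two_ne_zero
    -- partial derivatives in space
    set fρ : ℝ × ℝ → ℝ := fun x => fderiv ℝ (fun x : ℝ × ℝ => f x.1 x.2 t) x (1, 0) with hfρdef
    set fR : ℝ × ℝ → ℝ := fun x => fderiv ℝ (fun x : ℝ × ℝ => f x.1 x.2 t) x (0, 1) with hfRdef
    have hfρC1 : ContDiff ℝ 1 fρ :=
      (ContinuousLinearMap.apply ℝ ℝ ((1:ℝ), (0:ℝ))).contDiff.comp
        ((hf_C2 t).fderiv_right (by norm_num))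
    set fρρ : ℝ × ℝ → ℝ := fun x => fderiv ℝ fρ x (1, 0) with hfρρdef
    have hfρρc : Continuous fρρ :=
      (ContinuousLinearMap.apply ℝ ℝ ((1:ℝ), (0:ℝ))).continuous.comp
        (hfρC1.continuous_fderiv one_ne_zero)
    have hfρc : Continuous fρ := hfρC1.continuous
    have hfRc : Continuous fR :=
      (ContinuousLinearMap.apply ℝ ℝ ((0:ℝ), (1:ℝ))).continuous.comp
        ((hf_C2 t).continuous_fderiv two_ne_zero)
    have hdρ : ∀ ρ R : ℝ, HasDerivAt (fun p => f p R t) (fρ (ρ, R)) ρ := fun ρ R =>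
      hasDerivAt_fst _ hftd ρ R
    have hdR : ∀ ρ R : ℝ, HasDerivAt (fun r => f ρ r t) (fR (ρ, R)) R := fun ρ R =>
      hasDerivAt_snd _ hftd ρ R
    have hdρρ : ∀ ρ R : ℝ, HasDerivAt (fun p => fρ (p, R)) (fρρ (ρ, R)) ρ := fun ρ R =>
      hasDerivAt_fst _ (hfρC1.differentiable one_ne_zero) ρ R
    have hfρ0 : ∀ x, x ∉ K → fρ x = 0 := by
      intro x hx
      have hev : (fun x : ℝ × ℝ => f x.1 x.2 t) =ᶠ[nhds x] (fun _ => 0) :=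
        Filter.eventually_of_mem (hKopen.mem_nhds hx) fun y hy => hft0 y hy
      rw [hfρdef]
      simp only [hev.fderiv_eq, fderiv_const]
      simp
    have hfR0 : ∀ x, x ∉ K → fR x = 0 := by
      intro x hx
      have hev : (fun x : ℝ × ℝ => f x.1 x.2 t) =ᶠ[nhds x] (fun _ => 0) :=
        Filter.eventually_of_mem (hKopen.mem_nhds hx) fun y hy => hft0 y hy
      rw [hfRdef]
      simp only [hev.fderiv_eq, fderiv_const]
      simp
    have hfρρ0 : ∀ x, x ∉ K → fρρ x = 0 := by
      intro x hx
      have hev : fρ =ᶠ[nhds x] (fun _ => 0) :=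
        Filter.eventually_of_mem (hKopen.mem_nhds hx) fun y hy => hfρ0 y hy
      rw [hfρρdef]
      simp only [hev.fderiv_eq, fderiv_const]
      simp
    have hderiv_deriv : ∀ ρ R : ℝ, deriv (deriv (fun p => f p R t)) ρ = fρρ (ρ, R) := by
      intro ρ R
      have h1 : deriv (fun p => f p R t) = fun p => fρ (p, R) :=
        funext fun p => (hdρ p R).deriv
      rw [h1]
      exact (hdρρ ρ R).deriv
    -- the nonlocal coefficients
    set A : ℝ × ℝ → ℝ := fun x =>
      ∫ y : ℝ × ℝ, w (x.2 - y.2) * (b (x.1 - y.1) - b (x.2 - y.2)) * f y.1 y.2 t with hAdef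
    set Ar : ℝ × ℝ → ℝ := fun x =>
      ∫ y : ℝ × ℝ, (deriv w (x.2 - y.2) * (b (x.1 - y.1) - b (x.2 - y.2)) -
        w (x.2 - y.2) * deriv b (x.2 - y.2)) * f y.1 y.2 t with hArdef
    set Cf : ℝ × ℝ → ℝ := fun x =>
      ∫ y : ℝ × ℝ, w (x.2 - y.2) * c0 (y.1 - x.1) * f y.1 y.2 t with hCfdef
    set Cr : ℝ × ℝ → ℝ := fun x =>
      ∫ y : ℝ × ℝ, -(w (x.2 - y.2) * deriv c0 (y.1 - x.1)) * f y.1 y.2 t with hCrdef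
    set D1 : ℝ → ℝ := fun R => ∫ y : ℝ × ℝ, w (R - y.2) * f y.1 y.2 t with hD1def
    have hAc : Continuous A :=
      continuous_param_integral (P := ℝ × ℝ)
        (fun p y => w (p.2 - y.2) * (b (p.1 - y.1) - b (p.2 - y.2))) (by fun_prop)
        (fun y => f y.1 y.2 t) hftc K hK hft0
    have hArc : Continuous Ar :=
      continuous_param_integral (P := ℝ × ℝ)
        (fun p y => deriv w (p.2 - y.2) * (b (p.1 - y.1) - b (p.2 - y.2)) -
          w (p.2 - y.2) * deriv b (p.2 - y.2)) (by fun_prop)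
        (fun y => f y.1 y.2 t) hftc K hK hft0
    have hCfc : Continuous Cf :=
      continuous_param_integral (P := ℝ × ℝ)
        (fun p y => w (p.2 - y.2) * c0 (y.1 - p.1)) (by fun_prop)
        (fun y => f y.1 y.2 t) hftc K hK hft0
    have hCrc : Continuous Cr :=
      continuous_param_integral (P := ℝ × ℝ)
        (fun p y => -(w (p.2 - y.2) * deriv c0 (y.1 - p.1))) (by fun_prop)
        (fun y => f y.1 y.2 t) hftc K hK hft0
    have hD1c : Continuous D1 :=
      continuous_param_integral (P := ℝ)
        (fun p y => w (p - y.2)) (by fun_prop)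
        (fun y => f y.1 y.2 t) hftc K hK hft0
    -- differentiation of the nonlocal coefficients
    have hA_R : ∀ ρ R : ℝ, HasDerivAt
        (fun r => ∫ y : ℝ × ℝ, w (r - y.2) * (b (ρ - y.1) - b (r - y.2)) * f y.1 y.2 t)
        (Ar (ρ, R)) R := by
      intro ρ R
      refine hasDerivAt_param_integral
        (fun r y => w (r - y.2) * (b (ρ - y.1) - b (r - y.2)))
        (fun r y => deriv w (r - y.2) * (b (ρ - y.1) - b (r - y.2)) -
          w (r - y.2) * deriv b (r - y.2))
        (by fun_prop) (by fun_prop) (fun y r => ?_)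
        (fun y => f y.1 y.2 t) hftc K hK hft0 R
      have h1 : HasDerivAt (fun s : ℝ => w (s - y.2)) (deriv w (r - y.2) * 1) r :=
        (hwd (r - y.2)).comp r ((hasDerivAt_id r).sub_const y.2)
      have h2 : HasDerivAt (fun s : ℝ => b (ρ - y.1) - b (s - y.2))
          (0 - deriv b (r - y.2) * 1) r :=
        (hasDerivAt_const r (b (ρ - y.1))).sub
          ((hbd (r - y.2)).comp r ((hasDerivAt_id r).sub_const y.2))
      have h3 := h1.mul h2
      exact h3.congr_deriv (by ring)
    have hC_ρ : ∀ R ρ : ℝ, HasDerivAt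
        (fun p => ∫ y : ℝ × ℝ, w (R - y.2) * c0 (y.1 - p) * f y.1 y.2 t)
        (Cr (ρ, R)) ρ := by
      intro R ρ
      refine hasDerivAt_param_integral
        (fun p y => w (R - y.2) * c0 (y.1 - p))
        (fun p y => -(w (R - y.2) * deriv c0 (y.1 - p)))
        (by fun_prop) (by fun_prop) (fun y p => ?_)
        (fun y => f y.1 y.2 t) hftc K hK hft0 ρ
      have h1 : HasDerivAt (fun p' : ℝ => c0 (y.1 - p')) (deriv c0 (y.1 - p) * (0 - 1)) p :=
        (hc0d (y.1 - p)).comp p ((hasDerivAt_const p y.1).sub (hasDerivAt_id p))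
      have h2 := h1.const_mul (w (R - y.2))
      exact h2.congr_deriv (by ring)
    -- product rules
    have hprod1 : ∀ ρ R : ℝ, HasDerivAt
        (fun r => (∫ y : ℝ × ℝ, w (r - y.2) * (b (ρ - y.1) - b (r - y.2)) * f y.1 y.2 t)
          * f ρ r t)
        (Ar (ρ, R) * f ρ R t + A (ρ, R) * fR (ρ, R)) R := by
      intro ρ R
      have h := (hA_R ρ R).mul (hdR ρ R)
      exact h
    have hprod2 : ∀ R ρ : ℝ, HasDerivAt
        (fun p => (∫ y : ℝ × ℝ, w (R - y.2) * c0 (y.1 - p) * f y.1 y.2 t) * f p R t)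
        (Cr (ρ, R) * f ρ R t + Cf (ρ, R) * fρ (ρ, R)) ρ := by
      intro R ρ
      have h := (hC_ρ R ρ).mul (hdρ ρ R)
      exact h
    -- the pointwise time derivative
    have hdt : ∀ (x : ℝ × ℝ) (s : ℝ), HasDerivAt (fun s' => f x.1 x.2 s')
        (fderiv ℝ (fun q : ℝ × ℝ × ℝ => f q.1 q.2.1 q.2.2) (x.1, x.2, s) (0, 0, 1)) s :=
      fun x s => hasDerivAt_time _ (hf_C1.differentiable one_ne_zero) x.1 x.2 s
    set G : ℝ × ℝ → ℝ → ℝ := fun x s =>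
      fderiv ℝ (fun q : ℝ × ℝ × ℝ => f q.1 q.2.1 q.2.2) (x.1, x.2, s) (0, 0, 1) with hGdef
    have hGc : Continuous fun q : (ℝ × ℝ) × ℝ => G q.1 q.2 := by
      have h1 : Continuous (fderiv ℝ (fun q : ℝ × ℝ × ℝ => f q.1 q.2.1 q.2.2)) :=
        hf_C1.continuous_fderiv one_ne_zero
      have h2 : Continuous fun q : (ℝ × ℝ) × ℝ => (q.1.1, q.1.2, q.2) := by fun_prop
      exact (ContinuousLinearMap.apply ℝ ℝ ((0:ℝ), (0:ℝ), (1:ℝ))).continuous.comp (h1.comp h2)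
    have hG0 : ∀ x, x ∉ K → ∀ s, 0 < s → s < T → G x s = 0 := by
      intro x hx s hs0 hsT
      have hev : (fun s' => f x.1 x.2 s') =ᶠ[nhds s] (fun _ => 0) :=
        Filter.eventually_of_mem (isOpen_Ioo.mem_nhds ⟨hs0, hsT⟩)
          (fun s' hs' => hzero s' ⟨hs'.1.le, hs'.2.le⟩ x hx)
      have h1 := (hdt x s).deriv
      rw [hGdef]
      show fderiv ℝ (fun q : ℝ × ℝ × ℝ => f q.1 q.2.1 q.2.2) (x.1, x.2, s) (0, 0, 1) = 0
      rw [← h1, hev.deriv_eq, deriv_const]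
    -- derivative of F at t
    have hFd : HasDerivAt F (∫ x : ℝ × ℝ, x.2 * G x t) t := by
      set ε : ℝ := min t (T - t) with hεdef
      have hε : 0 < ε := lt_min ht0 (by linarith)
      have hball : Metric.ball t ε ⊆ Set.Ioo 0 T := by
        intro s hs
        rw [Metric.mem_ball, Real.dist_eq, abs_lt] at hs
        have h1 : ε ≤ t := min_le_left _ _
        have h2 : ε ≤ T - t := min_le_right _ _
        exact ⟨by linarith [hs.1], by linarith [hs.2]⟩
      obtain ⟨C, hC⟩ :=
        (hK.prod (isCompact_Icc (a := t - ε) (b := t + ε))).exists_bound_of_continuousOn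
          (Continuous.continuousOn (f := fun q : (ℝ × ℝ) × ℝ => q.1.2 * G q.1 q.2)
            ((continuous_snd.comp continuous_fst).mul hGc))
      have hmain := hasDerivAt_integral_of_dominated_loc_of_deriv_le (μ := volume)
        (F := fun s (x : ℝ × ℝ) => x.2 * f x.1 x.2 s)
        (F' := fun s (x : ℝ × ℝ) => x.2 * G x s)
        (bound := K.indicator fun _ => max C 0) (x₀ := t) (Metric.ball_mem_nhds t hε)
        (Filter.Eventually.of_forall fun s =>
          (continuous_snd.mul (hf_C2 s).continuous).aestronglyMeasurable)
        ?hint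
        (continuous_snd.mul (hGc.comp (continuous_id.prodMk continuous_const))).aestronglyMeasurable
        ?hbd (integrable_indicator_compact hK _) ?hdiff
      · exact hmain.2
      case hint =>
        refine Continuous.integrable_of_hasCompactSupport (continuous_snd.mul hftc)
          (HasCompactSupport.intro hK fun x hx => ?_)
        show x.2 * f x.1 x.2 t = 0
        rw [hzero t htI x hx, mul_zero]
      case hbd =>
        refine MeasureTheory.ae_of_all _ fun x s hs => ?_
        have hsI : s ∈ Set.Ioo (0:ℝ) T := hball hs
        by_cases hx : x ∈ K
        · rw [Set.indicator_of_mem hx]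
          refine le_max_of_le_left (hC (x, s) ⟨hx, ?_⟩)
          rw [Metric.mem_ball, Real.dist_eq, abs_lt] at hs
          exact ⟨by linarith [hs.1], by linarith [hs.2]⟩
        · rw [Set.indicator_of_notMem hx]
          show ‖x.2 * G x s‖ ≤ 0
          rw [hG0 x hx s hsI.1 hsI.2, mul_zero]
          simp
      case hdiff =>
        refine MeasureTheory.ae_of_all _ fun x s _ => ?_
        exact (hdt x s).const_mul x.2
    -- pointwise value of the time derivative via the PDE
    have hGt : ∀ x : ℝ × ℝ, G x t =
        -(Ar x * f x.1 x.2 t + A x * fR x) - (Cr x * f x.1 x.2 t + Cf x * fρ x)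
          + σ2 / 2 * D1 x.2 * fρρ x := by
      intro x
      obtain ⟨ρ, R⟩ := x
      dsimp only
      have h1 : G (ρ, R) t = deriv (fun s => f ρ R s) t := ((hdt (ρ, R) t).deriv).symm
      rw [h1, hpde ρ R t ht0 htT, (hprod1 ρ R).deriv, (hprod2 R ρ).deriv, hderiv_deriv ρ R]
    -- integrability of the three terms
    have hi1 : Integrable (fun x : ℝ × ℝ => x.2 * (-(Ar x * f x.1 x.2 t + A x * fR x))) := by
      refine Continuous.integrable_of_hasCompactSupport
        (continuous_snd.mul ((hArc.mul hftc).add (hAc.mul hfRc)).neg)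
        (HasCompactSupport.intro hK fun x hx => ?_)
      show x.2 * (-(Ar x * f x.1 x.2 t + A x * fR x)) = 0
      rw [hzero t htI x hx, hfR0 x hx]
      ring
    have hi2 : Integrable (fun x : ℝ × ℝ => x.2 * (-(Cr x * f x.1 x.2 t + Cf x * fρ x))) := by
      refine Continuous.integrable_of_hasCompactSupport
        (continuous_snd.mul ((hCrc.mul hftc).add (hCfc.mul hfρc)).neg)
        (HasCompactSupport.intro hK fun x hx => ?_)
      show x.2 * (-(Cr x * f x.1 x.2 t + Cf x * fρ x)) = 0
      rw [hzero t htI x hx, hfρ0 x hx]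
      ring
    have hi3 : Integrable (fun x : ℝ × ℝ => x.2 * (σ2 / 2 * D1 x.2 * fρρ x)) := by
      refine Continuous.integrable_of_hasCompactSupport
        (continuous_snd.mul ((continuous_const.mul (hD1c.comp continuous_snd)).mul hfρρc))
        (HasCompactSupport.intro hK fun x hx => ?_)
      show x.2 * (σ2 / 2 * D1 x.2 * fρρ x) = 0
      rw [hfρρ0 x hx]
      ring
    have hsplit : (∫ x : ℝ × ℝ, x.2 * G x t) =
        (∫ x : ℝ × ℝ, x.2 * (-(Ar x * f x.1 x.2 t + A x * fR x))) +
        ((∫ x : ℝ × ℝ, x.2 * (-(Cr x * f x.1 x.2 t + Cf x * fρ x))) +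
         (∫ x : ℝ × ℝ, x.2 * (σ2 / 2 * D1 x.2 * fρρ x))) := by
      have hi23 : Integrable (fun x : ℝ × ℝ =>
          x.2 * (-(Cr x * f x.1 x.2 t + Cf x * fρ x)) +
          x.2 * (σ2 / 2 * D1 x.2 * fρρ x)) := hi2.add hi3
      have e23 : (∫ x : ℝ × ℝ, (x.2 * (-(Cr x * f x.1 x.2 t + Cf x * fρ x)) +
            x.2 * (σ2 / 2 * D1 x.2 * fρρ x))) =
          (∫ x : ℝ × ℝ, x.2 * (-(Cr x * f x.1 x.2 t + Cf x * fρ x))) +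
          (∫ x : ℝ × ℝ, x.2 * (σ2 / 2 * D1 x.2 * fρρ x)) := integral_add hi2 hi3
      calc (∫ x : ℝ × ℝ, x.2 * G x t)
          = ∫ x : ℝ × ℝ, (x.2 * (-(Ar x * f x.1 x.2 t + A x * fR x)) +
              (x.2 * (-(Cr x * f x.1 x.2 t + Cf x * fρ x)) +
               x.2 * (σ2 / 2 * D1 x.2 * fρρ x))) :=
            integral_congr_ae (MeasureTheory.ae_of_all _ fun x => by show x.2 * G x t = _; rw [hGt x]; ring)
        _ = (∫ x : ℝ × ℝ, x.2 * (-(Ar x * f x.1 x.2 t + A x * fR x))) +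
            ∫ x : ℝ × ℝ, (x.2 * (-(Cr x * f x.1 x.2 t + Cf x * fρ x)) +
              x.2 * (σ2 / 2 * D1 x.2 * fρρ x)) := integral_add hi1 hi23
        _ = (∫ x : ℝ × ℝ, x.2 * (-(Ar x * f x.1 x.2 t + A x * fR x))) +
            ((∫ x : ℝ × ℝ, x.2 * (-(Cr x * f x.1 x.2 t + Cf x * fρ x))) +
             (∫ x : ℝ × ℝ, x.2 * (σ2 / 2 * D1 x.2 * fρρ x))) := by rw [e23]
    -- Term 1: integration by parts in R, then antisymmetry
    have hiAf : Integrable (fun x : ℝ × ℝ => A x * f x.1 x.2 t) := by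
      refine Continuous.integrable_of_hasCompactSupport (hAc.mul hftc)
        (HasCompactSupport.intro hK fun x hx => ?_)
      show A x * f x.1 x.2 t = 0
      rw [hzero t htI x hx, mul_zero]
    have hI1 : (∫ x : ℝ × ℝ, x.2 * (-(Ar x * f x.1 x.2 t + A x * fR x))) =
        ∫ x : ℝ × ℝ, A x * f x.1 x.2 t := by
      rw [fubini_fst _ hi1]
      have hinner : ∀ ρ : ℝ,
          (∫ R : ℝ, R * (-(Ar (ρ, R) * f ρ R t + A (ρ, R) * fR (ρ, R)))) =
          ∫ R : ℝ, A (ρ, R) * f ρ R t := by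
        intro ρ
        have hcρ : Continuous fun r : ℝ => ((ρ, r) : ℝ × ℝ) :=
          continuous_const.prodMk continuous_id
        simp only [mul_neg]
        rw [integral_neg]
        rw [integral_id_mul_deriv (fun r => A (ρ, r) * f ρ r t)
          (fun r => Ar (ρ, r) * f ρ r t + A (ρ, r) * fR (ρ, r))
          (fun r => hprod1 ρ r)
          (((hArc.comp hcρ).mul (hftc.comp hcρ)).add ((hAc.comp hcρ).mul (hfRc.comp hcρ)))
          (M + 1) (by linarith)
          (fun r hr => by show A (ρ, r) * f ρ r t = 0; rw [hzeroC t htI ρ r (hnotK2 ρ r hr), mul_zero])]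
        rw [neg_neg]
      exact (integral_congr_ae (MeasureTheory.ae_of_all _ hinner)).trans
        (fubini_fst _ hiAf).symm
    have hJ : (∫ x : ℝ × ℝ, A x * f x.1 x.2 t) = 0 := by
      set Φ : ℝ × ℝ → ℝ × ℝ → ℝ := fun x y =>
        w (x.2 - y.2) * (b (x.1 - y.1) - b (x.2 - y.2)) * f y.1 y.2 t * f x.1 x.2 t with hΦdef
      have hΦc : Continuous fun z : (ℝ × ℝ) × (ℝ × ℝ) => Φ z.1 z.2 := by
        rw [hΦdef]
        exact ((((hwc.comp ((continuous_snd.comp continuous_fst).sub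
            (continuous_snd.comp continuous_snd))).mul
          ((hbc.comp ((continuous_fst.comp continuous_fst).sub
            (continuous_fst.comp continuous_snd))).sub
           (hbc.comp ((continuous_snd.comp continuous_fst).sub
            (continuous_snd.comp continuous_snd))))).mul
          (hftc.comp continuous_snd)).mul (hftc.comp continuous_fst))
      have hΦint : Integrable (fun z : (ℝ × ℝ) × (ℝ × ℝ) => Φ z.1 z.2) := by
        refine Continuous.integrable_of_hasCompactSupport hΦc
          (HasCompactSupport.intro (hK.prod hK) fun z hz => ?_)
        show Φ z.1 z.2 = 0
        rw [hΦdef]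
        dsimp only
        rcases not_and_or.mp (by simpa [Set.mem_prod] using hz) with h | h
        · rw [hzero t htI z.1 h]; ring
        · rw [hzero t htI z.2 h]; ring
      have h2 : (∫ x : ℝ × ℝ, A x * f x.1 x.2 t) = ∫ x : ℝ × ℝ, ∫ y : ℝ × ℝ, Φ x y := by
        refine integral_congr_ae (MeasureTheory.ae_of_all _ fun x => ?_)
        show A x * f x.1 x.2 t = ∫ y : ℝ × ℝ, Φ x y
        rw [hAdef, hΦdef]
        exact (integral_mul_const _ _).symm
      have h3 : (∫ x : ℝ × ℝ, ∫ y : ℝ × ℝ, Φ x y) = ∫ y : ℝ × ℝ, ∫ x : ℝ × ℝ, Φ x y :=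
        fubini_swap Φ hΦint
      have h4 : ∀ x y : ℝ × ℝ, Φ x y = -Φ y x := by
        intro x y
        rw [hΦdef]
        dsimp only
        have e1 : ∀ u v : ℝ, w (u - v) = w (v - u) := fun u v => by
          rw [← hw_even (v - u), neg_sub]
        have e2 : ∀ u v : ℝ, b (u - v) = -b (v - u) := fun u v => by
          rw [← hb_odd (v - u), neg_sub]
        rw [e1 x.2 y.2, e2 x.1 y.1, e2 x.2 y.2]
        ring
      have h5 : (∫ y : ℝ × ℝ, ∫ x : ℝ × ℝ, Φ x y) = - ∫ y : ℝ × ℝ, ∫ x : ℝ × ℝ, Φ y x := by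
        rw [← integral_neg]
        refine integral_congr_ae (MeasureTheory.ae_of_all _ fun y => ?_)
        show (∫ x : ℝ × ℝ, Φ x y) = - ∫ x : ℝ × ℝ, Φ y x
        rw [← integral_neg]
        exact integral_congr_ae (MeasureTheory.ae_of_all _ fun x => h4 x y)
      have h6 : (∫ y : ℝ × ℝ, ∫ x : ℝ × ℝ, Φ y x) = ∫ x : ℝ × ℝ, A x * f x.1 x.2 t := h2.symm
      have hfin := h2.trans (h3.trans (h5.trans (by rw [h6])))
      linarith
    -- Term 2: full derivative in ρ integrates to zero
    have hI2 : (∫ x : ℝ × ℝ, x.2 * (-(Cr x * f x.1 x.2 t + Cf x * fρ x))) = 0 := by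
      rw [fubini_snd _ hi2]
      have hinner : ∀ R : ℝ,
          (∫ ρ : ℝ, R * (-(Cr (ρ, R) * f ρ R t + Cf (ρ, R) * fρ (ρ, R)))) = 0 := by
        intro R
        have hcR : Continuous fun p : ℝ => ((p, R) : ℝ × ℝ) :=
          continuous_id.prodMk continuous_const
        rw [integral_const_mul, integral_neg]
        rw [integral_deriv_eq_zero (fun p => Cf (p, R) * f p R t)
          (fun p => Cr (p, R) * f p R t + Cf (p, R) * fρ (p, R))
          (fun p => hprod2 R p)
          (((hCrc.comp hcR).mul (hftc.comp hcR)).add ((hCfc.comp hcR).mul (hfρc.comp hcR)))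
          (M + 1) (by linarith)
          (fun p hp => by show Cf (p, R) * f p R t = 0; rw [hzeroC t htI p R (hnotK1 p R hp), mul_zero])]
        ring
      exact (integral_congr_ae (MeasureTheory.ae_of_all _ hinner)).trans (integral_zero _ _)
    -- Term 3: second derivative in ρ integrates to zero
    have hI3 : (∫ x : ℝ × ℝ, x.2 * (σ2 / 2 * D1 x.2 * fρρ x)) = 0 := by
      rw [fubini_snd _ hi3]
      have hinner : ∀ R : ℝ, (∫ ρ : ℝ, R * (σ2 / 2 * D1 R * fρρ (ρ, R))) = 0 := by
        intro R
        have hre : ∀ ρ : ℝ, R * (σ2 / 2 * D1 R * fρρ (ρ, R)) =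
            (R * (σ2 / 2 * D1 R)) * fρρ (ρ, R) := fun ρ => by ring
        rw [integral_congr_ae (MeasureTheory.ae_of_all _ hre), integral_const_mul]
        rw [integral_deriv_eq_zero (fun p => fρ (p, R)) (fun p => fρρ (p, R))
          (fun p => hdρρ p R)
          (hfρρc.comp (continuous_id.prodMk continuous_const))
          (M + 1) (by linarith)
          (fun p hp => hfρ0 (p, R) (hnotK1 p R hp))]
        ring
      exact (integral_congr_ae (MeasureTheory.ae_of_all _ hinner)).trans (integral_zero _ _)
    have hzero_int : (∫ x : ℝ × ℝ, x.2 * G x t) = 0 := by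
      rw [hsplit, hI1, hJ, hI2, hI3]
      ring
    rw [← hzero_int]
    exact hFd


  have Fcont : ContinuousOn F (Set.Icc 0 T) := by
    intro t₀ ht₀
    obtain ⟨C, hC⟩ := (hK.prod (isCompact_Icc (a := (0:ℝ)) (b := T))).exists_bound_of_continuousOn
      (Continuous.continuousOn (f := fun q : (ℝ × ℝ) × ℝ => q.1.2 * f q.1.1 q.1.2 q.2)
        (by have := hf_C1.continuous; fun_prop))
    apply tendsto_integral_filter_of_dominated_convergence (K.indicator fun _ => max C 0)
    · exact Filter.Eventually.of_forall fun s =>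
        (continuous_snd.mul (hf_C2 s).continuous).aestronglyMeasurable
    · refine Filter.eventually_of_mem self_mem_nhdsWithin fun s hs => ?_
      refine MeasureTheory.ae_of_all _ fun x => ?_
      by_cases hx : x ∈ K
      · rw [Set.indicator_of_mem hx]
        exact le_max_of_le_left (hC ((x.1, x.2), s) ⟨by simpa using hx, hs⟩)
      · rw [Set.indicator_of_notMem hx, hzero s hs x hx, mul_zero]
        simp
    · exact integrable_indicator_compact hK _
    · refine MeasureTheory.ae_of_all _ fun x => ?_
      have hc : Continuous fun s => x.2 * f x.1 x.2 s := by
        have h1 : Continuous fun s : ℝ => (x.1, x.2, s) := by fun_prop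
        exact continuous_const.mul (hf_C1.continuous.comp h1)
      exact (hc.tendsto t₀).mono_left nhdsWithin_le_nhds
  have main : ∀ t1 t2, t1 ∈ Set.Icc (0:ℝ) T → t2 ∈ Set.Icc (0:ℝ) T → t1 < t2 →
      F t1 = F t2 := by
    intro t1 t2 h1 h2 hlt
    obtain ⟨c, hc, hderiv⟩ := exists_deriv_eq_slope F hlt
      (Fcont.mono (Set.Icc_subset_Icc h1.1 h2.2))
      (fun s hs => (key s (lt_of_le_of_lt h1.1 hs.1)
        (lt_of_lt_of_le hs.2 h2.2)).differentiableAt.differentiableWithinAt)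
    rw [(key c (lt_of_le_of_lt h1.1 hc.1) (lt_of_lt_of_le hc.2 h2.2)).deriv] at hderiv
    have hne : t2 - t1 ≠ 0 := by linarith
    have := (div_eq_zero_iff.mp hderiv.symm).resolve_right hne
    linarith [this]
  intro t1 h1 t2 h2
  rcases lt_trichotomy t1 t2 with h|h|h
  · exact main t1 t2 h1 h2 h
  · rw [h]
  · exact (main t2 t1 h2 h1 h).symm
end

section
/- Let $\sigma^2\ge0$, $\alpha,\beta\ge0$, let $w:\mathbb{R}\to\mathbb{R}$ be an even bounded $C^1$ function, and let $b,p:\mathbb{R}\to\mathbb{R}$ be odd bounded $C^1$ functions. Let $f:\mathbb{R}^2\times[0,T]\to[0,\infty)$ be continuously differentiable in all variables, twice continuously differentiable in $(\rho,R)$, with $\operatorname{supp} f(\cdot,\cdot,t)$ contained in one fixed compact set $K\subset\mathbb{R}^2$ for all $t\in[0,T]$, and satisfying pointwise the Fokker-Planck equation $\partial_t f = -\partial_R(a[f]f) - \partial_\rho(c[f]f) + \tfrac{\sigma^2}{2}\,d[f]\,\partial^2_\rho f$, where $a[f](\rho,R,t)=\int w(R-R')(b(\rho-\rho')-b(R-R'))f(\rho',R',t)\,d\rho'dR'$,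 $c[f](\rho,R,t)=\int w(R-R')\big(\alpha(1+b(\rho'-\rho))+\beta p(\rho'-\rho)\big)f(\rho',R',t)\,d\rho'dR'$, and $d[f](R,t)=\int w(R-R')f(\rho',R',t)\,d\rho'dR'$. Then for all $t\in(0,T)$, $\frac{d}{dt}\int_{\mathbb{R}^2}\rho\, f(\rho,R,t)\,d\rho\,dR \;=\; \alpha\int_{\mathbb{R}^4} w(R-R')\,f(\rho,R,t)\,f(\rho',R',t)\,d\rho'\,dR'\,d\rho\,dR$. -/
open MeasureTheory Function Set

-- integral of derivative of compactly supported C¹ function is zero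
lemma my_integral_deriv_zero (φ : ℝ → ℝ) (h1 : ContDiff ℝ 1 φ) (h2 : HasCompactSupport φ) :
    ∫ x : ℝ, deriv φ x = 0 := by
  have hL := h2.integral_Iic_deriv_eq h1 0
  have hR := h2.integral_Ioi_deriv_eq h1 0
  have hint : Integrable (deriv φ) := by
    exact (h1.continuous_deriv le_rfl).integrable_of_hasCompactSupport h2.deriv
  rw [← intervalIntegral.integral_Iic_add_Ioi (b := (0:ℝ)) hint.integrableOn hint.integrableOn, hL, hR]
  ring

-- integration by parts: ∫ x * φ'(x) = -∫ φ
lemma my_integral_parts (φ : ℝ → ℝ) (h1 : ContDiff ℝ 1 φ) (h2 : HasCompactSupport φ) :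
    ∫ x : ℝ, x * deriv φ x = -∫ x : ℝ, φ x := by
  have hψ1 : ContDiff ℝ 1 (fun x : ℝ => x * φ x) := contDiff_id.mul h1
  have hψ2 : HasCompactSupport (fun x : ℝ => x * φ x) := by
    apply HasCompactSupport.intro' h2.isCompact (isClosed_tsupport φ)
    intro x hx
    simp [image_eq_zero_of_notMem_tsupport hx]
  have h0 := my_integral_deriv_zero _ hψ1 hψ2
  have hder : ∀ x : ℝ, deriv (fun x : ℝ => x * φ x) x = φ x + x * deriv φ x := by
    intro x
    have := (hasDerivAt_id x).mul ((h1.differentiable one_ne_zero x).hasDerivAt)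
    rw [show (fun x : ℝ => x * φ x) = id * φ from rfl, this.deriv]
    simp
  rw [funext hder] at h0
  have hiφ : Integrable φ := h1.continuous.integrable_of_hasCompactSupport h2
  have hi2 : Integrable (fun x : ℝ => x * deriv φ x) := by
    exact (continuous_id.mul (h1.continuous_deriv le_rfl)).integrable_of_hasCompactSupport
      (h2.deriv.mul_left)
  rw [integral_add hiφ hi2] at h0
  linarith

lemma my_integral_second (φ : ℝ → ℝ) (h1 : ContDiff ℝ 2 φ) (h2 : HasCompactSupport φ) :
    ∫ x : ℝ, x * deriv (deriv φ) x = 0 := by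
  have h1' : ContDiff ℝ 1 (deriv φ) := by
    have : ContDiff ℝ (1+1) φ := by norm_num [h1]
    exact (contDiff_succ_iff_deriv.mp this).2.2
  rw [my_integral_parts _ h1' h2.deriv, my_integral_deriv_zero _ (h1.of_le one_le_two) h2]
  simp

lemma my_hasDerivAt_snd (F : ℝ×ℝ → ℝ) (hF : Differentiable ℝ F) (ρ R : ℝ) :
    HasDerivAt (fun r => F (ρ, r)) (fderiv ℝ F (ρ, R) (0, 1)) R := by
  have h1 : HasDerivAt (fun r : ℝ => ((ρ, r) : ℝ×ℝ)) ((0:ℝ),(1:ℝ)) R :=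
    (hasDerivAt_const R ρ).prodMk (hasDerivAt_id R)
  exact (hF (ρ,R)).hasFDerivAt.comp_hasDerivAt R h1

lemma my_hasDerivAt_fst (F : ℝ×ℝ → ℝ) (hF : Differentiable ℝ F) (ρ R : ℝ) :
    HasDerivAt (fun q => F (q, R)) (fderiv ℝ F (ρ, R) (1, 0)) ρ := by
  have h1 : HasDerivAt (fun q : ℝ => ((q, R) : ℝ×ℝ)) ((1:ℝ),(0:ℝ)) ρ :=
    (hasDerivAt_id ρ).prodMk (hasDerivAt_const ρ R)
  exact (hF (ρ,R)).hasFDerivAt.comp_hasDerivAt ρ h1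

lemma my_cont_pderiv (F : ℝ×ℝ → ℝ) (hF : ContDiff ℝ 1 F) (v : ℝ×ℝ) :
    Continuous fun x => fderiv ℝ F x v :=
  (hF.continuous_fderiv one_ne_zero).clm_apply continuous_const

lemma my_slice_cs_snd (φ : ℝ×ℝ → ℝ) {K : Set (ℝ×ℝ)} (hK : IsCompact K)
    (h : Function.support φ ⊆ K) (ρ : ℝ) : HasCompactSupport fun r => φ (ρ, r) := by
  apply HasCompactSupport.intro (hK.image continuous_snd)
  intro r hr
  by_contra h0
  exact hr ⟨(ρ, r), h h0, rfl⟩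

lemma my_slice_cs_fst (φ : ℝ×ℝ → ℝ) {K : Set (ℝ×ℝ)} (hK : IsCompact K)
    (h : Function.support φ ⊆ K) (R : ℝ) : HasCompactSupport fun q => φ (q, R) := by
  apply HasCompactSupport.intro (hK.image continuous_fst)
  intro q hq
  by_contra h0
  exact hq ⟨(q, R), h h0, rfl⟩

lemma my_conv_smooth (g k : ℝ×ℝ → ℝ) (hg : ContDiff ℝ 1 g) (hgs : HasCompactSupport g)
    (hk : ContDiff ℝ 1 k) : ContDiff ℝ 1 fun x : ℝ×ℝ => ∫ y : ℝ×ℝ, g y * k (x - y) := by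
  have h := hgs.contDiff_convolution_left (μ := (volume : Measure (ℝ×ℝ)))
    (ContinuousLinearMap.mul ℝ ℝ) hg (hk.continuous.locallyIntegrable)
  have heq : (fun x : ℝ×ℝ => ∫ y : ℝ×ℝ, g y * k (x - y))
      = convolution g k (ContinuousLinearMap.mul ℝ ℝ) volume := by
    funext x; rw [convolution_def]; rfl
  rw [heq]; exact h

lemma my_integrable_of_support (F : ℝ×ℝ → ℝ) (hF : Continuous F) {K : Set (ℝ×ℝ)}
    (hK : IsCompact K) (hs : Function.support F ⊆ K) : Integrable F := by
  apply hF.integrable_of_hasCompactSupport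
  apply HasCompactSupport.intro hK
  intro x hx
  by_contra h0
  exact hx (hs (Function.mem_support.mpr h0))

lemma my_fderiv_support (P : ℝ×ℝ → ℝ) {K : Set (ℝ×ℝ)} (hKc : IsClosed K)
    (hs : Function.support P ⊆ K) (x : ℝ×ℝ) (hx : x ∉ K) :
    fderiv ℝ P x = 0 := by
  by_contra hne
  exact hx (closure_minimal hs hKc (support_fderiv_subset ℝ (Function.mem_support.mpr hne)))

lemma my_int_deriv_snd_integrable (P : ℝ×ℝ → ℝ) (hP : ContDiff ℝ 1 P)
    {K : Set (ℝ×ℝ)} (hK : IsCompact K) (hs : Function.support P ⊆ K) :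
    Integrable (fun x : ℝ×ℝ => x.1 * deriv (fun r => P (x.1, r)) x.2) := by
  have hPd := hP.differentiable one_ne_zero
  have key : (fun x : ℝ×ℝ => x.1 * deriv (fun r => P (x.1, r)) x.2)
      = fun x : ℝ×ℝ => x.1 * fderiv ℝ P x ((0:ℝ), (1:ℝ)) := by
    funext x
    rw [(my_hasDerivAt_snd P hPd x.1 x.2).deriv]
  rw [key]
  apply my_integrable_of_support _ (continuous_fst.mul (my_cont_pderiv P hP _)) hK
  intro x hx
  by_contra hxK
  apply Function.mem_support.mp hx
  simp only [Pi.mul_apply]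
  rw [my_fderiv_support P hK.isClosed hs x hxK]
  simp

lemma my_int_deriv_snd_zero (P : ℝ×ℝ → ℝ) (hP : ContDiff ℝ 1 P)
    {K : Set (ℝ×ℝ)} (hK : IsCompact K) (hs : Function.support P ⊆ K) :
    ∫ x : ℝ×ℝ, x.1 * deriv (fun r => P (x.1, r)) x.2 = 0 := by
  have hint := my_int_deriv_snd_integrable P hP hK hs
  rw [MeasureTheory.Measure.volume_eq_prod ℝ ℝ] at hint
  rw [MeasureTheory.Measure.volume_eq_prod ℝ ℝ, integral_prod _ hint]
  have inner : ∀ ρ : ℝ,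
      (∫ R : ℝ, (ρ, R).1 * deriv (fun r => P ((ρ, R).1, r)) (ρ, R).2) = 0 := by
    intro ρ
    have h1 : ContDiff ℝ 1 (fun r => P (ρ, r)) := hP.comp (contDiff_const.prodMk contDiff_id)
    have h2 : HasCompactSupport (fun r => P (ρ, r)) := my_slice_cs_snd P hK hs ρ
    have h3 := my_integral_deriv_zero _ h1 h2
    calc (∫ R : ℝ, (ρ, R).1 * deriv (fun r => P ((ρ, R).1, r)) (ρ, R).2)
        = ∫ R : ℝ, ρ * deriv (fun r => P (ρ, r)) R := rfl
      _ = ρ * ∫ R : ℝ, deriv (fun r => P (ρ, r)) R := integral_const_mul ρ _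
      _ = 0 := by rw [h3, mul_zero]
  calc (∫ ρ : ℝ, ∫ R : ℝ, (ρ, R).1 * deriv (fun r => P ((ρ, R).1, r)) (ρ, R).2)
      = ∫ ρ : ℝ, (0:ℝ) := by
        refine integral_congr_ae (Filter.Eventually.of_forall fun ρ => ?_)
        exact inner ρ
    _ = 0 := integral_zero _ _

lemma my_int_deriv_fst_integrable (Q : ℝ×ℝ → ℝ) (hQ : ContDiff ℝ 1 Q)
    {K : Set (ℝ×ℝ)} (hK : IsCompact K) (hs : Function.support Q ⊆ K) :
    Integrable (fun x : ℝ×ℝ => x.1 * deriv (fun q => Q (q, x.2)) x.1) := by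
  have hQd := hQ.differentiable one_ne_zero
  have key : (fun x : ℝ×ℝ => x.1 * deriv (fun q => Q (q, x.2)) x.1)
      = fun x : ℝ×ℝ => x.1 * fderiv ℝ Q x ((1:ℝ), (0:ℝ)) := by
    funext x
    rw [(my_hasDerivAt_fst Q hQd x.1 x.2).deriv]
  rw [key]
  apply my_integrable_of_support _ (continuous_fst.mul (my_cont_pderiv Q hQ _)) hK
  intro x hx
  by_contra hxK
  apply Function.mem_support.mp hx
  simp only [Pi.mul_apply]
  rw [my_fderiv_support Q hK.isClosed hs x hxK]
  simp

lemma my_int_deriv_fst_parts (Q : ℝ×ℝ → ℝ) (hQ : ContDiff ℝ 1 Q)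
    {K : Set (ℝ×ℝ)} (hK : IsCompact K) (hs : Function.support Q ⊆ K) :
    ∫ x : ℝ×ℝ, x.1 * deriv (fun q => Q (q, x.2)) x.1 = - ∫ x : ℝ×ℝ, Q x := by
  have hint := my_int_deriv_fst_integrable Q hQ hK hs
  have hQint : Integrable Q := my_integrable_of_support Q hQ.continuous hK hs
  rw [MeasureTheory.Measure.volume_eq_prod ℝ ℝ] at hint hQint ⊢
  have inner : ∀ R : ℝ,
      (∫ ρ : ℝ, (ρ, R).1 * deriv (fun q => Q (q, (ρ, R).2)) (ρ, R).1)
        = - ∫ ρ : ℝ, Q (ρ, R) := by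
    intro R
    have h1 : ContDiff ℝ 1 (fun q => Q (q, R)) := hQ.comp (contDiff_id.prodMk contDiff_const)
    have h2 : HasCompactSupport (fun q => Q (q, R)) := my_slice_cs_fst Q hK hs R
    exact my_integral_parts _ h1 h2
  calc (∫ x : ℝ×ℝ, x.1 * deriv (fun q => Q (q, x.2)) x.1
          ∂((volume : Measure ℝ).prod (volume : Measure ℝ)))
      = ∫ ρ : ℝ, ∫ R : ℝ, (ρ, R).1 * deriv (fun q => Q (q, (ρ, R).2)) (ρ, R).1 :=
        integral_prod _ hint
    _ = ∫ R : ℝ, ∫ ρ : ℝ, (ρ, R).1 * deriv (fun q => Q (q, (ρ, R).2)) (ρ, R).1 :=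
        integral_integral_swap
          (f := fun ρ R => (ρ, R).1 * deriv (fun q => Q (q, (ρ, R).2)) (ρ, R).1)
          (by exact hint)
    _ = ∫ R : ℝ, - ∫ ρ : ℝ, Q (ρ, R) :=
        integral_congr_ae (Filter.Eventually.of_forall fun R => inner R)
    _ = - ∫ R : ℝ, ∫ ρ : ℝ, Q (ρ, R) := integral_neg _
    _ = - ∫ ρ : ℝ, ∫ R : ℝ, Q (ρ, R) := by
        rw [integral_integral_swap (f := fun ρ R => Q (ρ, R)) (by exact hQint)]
    _ = - ∫ x : ℝ×ℝ, Q x ∂((volume : Measure ℝ).prod (volume : Measure ℝ)) := by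
        rw [integral_prod _ hQint]

lemma my_int_second_integrable (g : ℝ×ℝ → ℝ) (hg : ContDiff ℝ 2 g)
    {K : Set (ℝ×ℝ)} (hK : IsCompact K) (hs : Function.support g ⊆ K)
    (c : ℝ → ℝ) (hc : Continuous c) :
    Integrable (fun x : ℝ×ℝ => x.1 * (c x.2 * deriv (deriv (fun q => g (q, x.2))) x.1)) := by
  have hgd : Differentiable ℝ g := hg.differentiable two_ne_zero
  have hu : ContDiff ℝ 1 (fun x : ℝ×ℝ => fderiv ℝ g x ((1:ℝ), (0:ℝ))) :=
    (hg.fderiv_right (by norm_num)).clm_apply contDiff_const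
  have hud : Differentiable ℝ (fun x : ℝ×ℝ => fderiv ℝ g x ((1:ℝ), (0:ℝ))) :=
    hu.differentiable one_ne_zero
  have husupp : Function.support (fun x : ℝ×ℝ => fderiv ℝ g x ((1:ℝ), (0:ℝ))) ⊆ K := by
    intro x hx
    by_contra hxK
    apply Function.mem_support.mp hx
    rw [my_fderiv_support g hK.isClosed hs x hxK]
    simp
  have key : ∀ x : ℝ×ℝ, deriv (deriv (fun q => g (q, x.2))) x.1
      = fderiv ℝ (fun z : ℝ×ℝ => fderiv ℝ g z ((1:ℝ), (0:ℝ))) x ((1:ℝ), (0:ℝ)) := by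
    intro x
    have h1 : deriv (fun q => g (q, x.2)) = fun q => fderiv ℝ g (q, x.2) ((1:ℝ), (0:ℝ)) :=
      funext fun q => (my_hasDerivAt_fst g hgd q x.2).deriv
    rw [h1]
    exact (my_hasDerivAt_fst (fun z : ℝ×ℝ => fderiv ℝ g z ((1:ℝ), (0:ℝ))) hud x.1 x.2).deriv
  have keyf : (fun x : ℝ×ℝ => x.1 * (c x.2 * deriv (deriv (fun q => g (q, x.2))) x.1))
      = fun x : ℝ×ℝ => x.1 * (c x.2 *
          fderiv ℝ (fun z : ℝ×ℝ => fderiv ℝ g z ((1:ℝ), (0:ℝ))) x ((1:ℝ), (0:ℝ))) := by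
    funext x; rw [key x]
  rw [keyf]
  apply my_integrable_of_support _
    (continuous_fst.mul ((hc.comp continuous_snd).mul (my_cont_pderiv _ hu _))) hK
  intro x hx
  by_contra hxK
  apply Function.mem_support.mp hx
  simp only [Pi.mul_apply]
  rw [my_fderiv_support _ hK.isClosed husupp x hxK]
  simp

lemma my_int_second_zero (g : ℝ×ℝ → ℝ) (hg : ContDiff ℝ 2 g)
    {K : Set (ℝ×ℝ)} (hK : IsCompact K) (hs : Function.support g ⊆ K)
    (c : ℝ → ℝ) (hc : Continuous c) :
    ∫ x : ℝ×ℝ, x.1 * (c x.2 * deriv (deriv (fun q => g (q, x.2))) x.1) = 0 := by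
  have hint := my_int_second_integrable g hg hK hs c hc
  rw [MeasureTheory.Measure.volume_eq_prod ℝ ℝ] at hint ⊢
  rw [integral_prod _ hint, integral_integral_swap hint]
  have inner : ∀ R : ℝ,
      (∫ ρ : ℝ, (ρ, R).1 * (c (ρ, R).2 * deriv (deriv (fun q => g (q, (ρ, R).2))) (ρ, R).1))
        = 0 := by
    intro R
    have h1 : ContDiff ℝ 2 (fun q => g (q, R)) := hg.comp (contDiff_id.prodMk contDiff_const)
    have h2 : HasCompactSupport (fun q => g (q, R)) := my_slice_cs_fst g hK hs R
    have h3 := my_integral_second _ h1 h2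
    calc (∫ ρ : ℝ, (ρ, R).1 * (c (ρ, R).2 * deriv (deriv (fun q => g (q, (ρ, R).2))) (ρ, R).1))
        = ∫ ρ : ℝ, c R * (ρ * deriv (deriv (fun q => g (q, R))) ρ) := by
          refine integral_congr_ae (Filter.Eventually.of_forall fun ρ => ?_)
          show ρ * (c R * deriv (deriv (fun q => g (q, R))) ρ)
            = c R * (ρ * deriv (deriv (fun q => g (q, R))) ρ)
          ring
      _ = c R * ∫ ρ : ℝ, ρ * deriv (deriv (fun q => g (q, R))) ρ := integral_const_mul _ _
      _ = 0 := by rw [h3, mul_zero]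
  calc (∫ R : ℝ, ∫ ρ : ℝ, (ρ, R).1 * (c (ρ, R).2 * deriv (deriv (fun q => g (q, (ρ, R).2))) (ρ, R).1))
      = ∫ R : ℝ, (0:ℝ) := by
        refine integral_congr_ae (Filter.Eventually.of_forall fun R => ?_)
        exact inner R
    _ = 0 := integral_zero _ _

lemma my_integrable_of_support4 (F : (ℝ×ℝ)×(ℝ×ℝ) → ℝ) (hF : Continuous F)
    {K : Set ((ℝ×ℝ)×(ℝ×ℝ))} (hK : IsCompact K) (hs : Function.support F ⊆ K) :
    Integrable F ((volume : Measure (ℝ×ℝ)).prod (volume : Measure (ℝ×ℝ))) := by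
  rw [← MeasureTheory.Measure.volume_eq_prod]
  apply hF.integrable_of_hasCompactSupport
  apply HasCompactSupport.intro hK
  intro x hx
  by_contra h0
  exact hx (hs (Function.mem_support.mpr h0))

lemma my_antisym (G : (ℝ×ℝ) → (ℝ×ℝ) → ℝ)
    (hGi : Integrable (fun z : (ℝ×ℝ)×(ℝ×ℝ) => G z.1 z.2)
      ((volume : Measure (ℝ×ℝ)).prod (volume : Measure (ℝ×ℝ))))
    (hanti : ∀ x y, G y x = - G x y) :
    ∫ x : ℝ×ℝ, ∫ y : ℝ×ℝ, G x y = 0 := by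
  have h1 : (∫ x : ℝ×ℝ, ∫ y : ℝ×ℝ, G x y)
      = ∫ z : (ℝ×ℝ)×(ℝ×ℝ), G z.1 z.2
          ∂((volume : Measure (ℝ×ℝ)).prod (volume : Measure (ℝ×ℝ))) :=
    integral_integral (by exact hGi)
  have h2 := integral_prod_swap (μ := (volume : Measure (ℝ×ℝ)))
    (ν := (volume : Measure (ℝ×ℝ))) (fun z : (ℝ×ℝ)×(ℝ×ℝ) => G z.1 z.2)
  have h3 : (∫ z : (ℝ×ℝ)×(ℝ×ℝ), G z.swap.1 z.swap.2
        ∂((volume : Measure (ℝ×ℝ)).prod (volume : Measure (ℝ×ℝ))))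
      = - ∫ z : (ℝ×ℝ)×(ℝ×ℝ), G z.1 z.2
          ∂((volume : Measure (ℝ×ℝ)).prod (volume : Measure (ℝ×ℝ))) := by
    rw [← integral_neg]
    refine integral_congr_ae (Filter.Eventually.of_forall fun z => ?_)
    show G z.2 z.1 = - G z.1 z.2
    exact hanti z.1 z.2
  rw [h1]
  have := h3.symm.trans h2
  linarith

lemma my_space_step (σ2 α β : ℝ) (w b p : ℝ → ℝ)
    (hw_even : ∀ z, w (-z) = w z) (hw_smooth : ContDiff ℝ 1 w)
    (hb_odd : ∀ z, b (-z) = -b z) (hb_smooth : ContDiff ℝ 1 b)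
    (hp_odd : ∀ z, p (-z) = -p z) (hp_smooth : ContDiff ℝ 1 p)
    (g : ℝ × ℝ → ℝ) (hg2 : ContDiff ℝ 2 g)
    (K : Set (ℝ × ℝ)) (hK : IsCompact K) (hgK : Function.support g ⊆ K)
    (ft : ℝ × ℝ → ℝ)
    (hft : ∀ x : ℝ × ℝ, ft x =
        -(deriv (fun r =>
            (∫ y : ℝ × ℝ, w (r - y.2) * (b (x.1 - y.1) - b (r - y.2)) * g y) *
              g (x.1, r)) x.2)
        - deriv (fun q =>
            (∫ y : ℝ × ℝ, w (x.2 - y.2) *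
                (α * (1 + b (y.1 - q)) + β * p (y.1 - q)) * g y) * g (q, x.2)) x.1
        + σ2 / 2 * (∫ y : ℝ × ℝ, w (x.2 - y.2) * g y) *
            deriv (deriv (fun q => g (q, x.2))) x.1) :
    ∫ x : ℝ × ℝ, x.1 * ft x
      = α * ∫ x : ℝ × ℝ, (∫ y : ℝ × ℝ, w (x.2 - y.2) * g y) * g x := by
  have hg1 : ContDiff ℝ 1 g := hg2.of_le one_le_two
  have hgc : Continuous g := hg1.continuous
  have hgcs : HasCompactSupport g := by
    apply HasCompactSupport.intro hK
    intro x hx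
    by_contra h0
    exact hx (hgK (Function.mem_support.mpr h0))
  -- smoothness of the nonlocal coefficients
  have hA : ContDiff ℝ 1 (fun x : ℝ×ℝ =>
      ∫ y : ℝ×ℝ, w (x.2 - y.2) * (b (x.1 - y.1) - b (x.2 - y.2)) * g y) := by
    have hk : ContDiff ℝ 1 (fun u : ℝ×ℝ => w u.2 * (b u.1 - b u.2)) :=
      (hw_smooth.comp contDiff_snd).mul
        ((hb_smooth.comp contDiff_fst).sub (hb_smooth.comp contDiff_snd))
    have h := my_conv_smooth g _ hg1 hgcs hk
    have heq : (fun x : ℝ×ℝ => ∫ y : ℝ×ℝ, w (x.2 - y.2) * (b (x.1 - y.1) - b (x.2 - y.2)) * g y)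
        = fun x : ℝ×ℝ => ∫ y : ℝ×ℝ, g y * (fun u : ℝ×ℝ => w u.2 * (b u.1 - b u.2)) (x - y) := by
      funext x
      refine integral_congr_ae (Filter.Eventually.of_forall fun y => ?_)
      show w (x.2 - y.2) * (b (x.1 - y.1) - b (x.2 - y.2)) * g y
        = g y * (w ((x - y).2) * (b ((x - y).1) - b ((x - y).2)))
      simp only [Prod.fst_sub, Prod.snd_sub]
      ring
    rw [heq]; exact h
  have hC : ContDiff ℝ 1 (fun x : ℝ×ℝ =>
      ∫ y : ℝ×ℝ, w (x.2 - y.2) * (α * (1 + b (y.1 - x.1)) + β * p (y.1 - x.1)) * g y) := by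
    have hk : ContDiff ℝ 1 (fun u : ℝ×ℝ => w u.2 * (α * (1 + b (-u.1)) + β * p (-u.1))) :=
      (hw_smooth.comp contDiff_snd).mul
        ((contDiff_const.mul (contDiff_const.add (hb_smooth.comp contDiff_fst.neg))).add
          (contDiff_const.mul (hp_smooth.comp contDiff_fst.neg)))
    have h := my_conv_smooth g _ hg1 hgcs hk
    have heq : (fun x : ℝ×ℝ =>
          ∫ y : ℝ×ℝ, w (x.2 - y.2) * (α * (1 + b (y.1 - x.1)) + β * p (y.1 - x.1)) * g y)
        = fun x : ℝ×ℝ => ∫ y : ℝ×ℝ,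
            g y * (fun u : ℝ×ℝ => w u.2 * (α * (1 + b (-u.1)) + β * p (-u.1))) (x - y) := by
      funext x
      refine integral_congr_ae (Filter.Eventually.of_forall fun y => ?_)
      show w (x.2 - y.2) * (α * (1 + b (y.1 - x.1)) + β * p (y.1 - x.1)) * g y
        = g y * (w ((x - y).2) * (α * (1 + b (-(x - y).1)) + β * p (-(x - y).1)))
      simp only [Prod.fst_sub, Prod.snd_sub, neg_sub]
      ring
    rw [heq]; exact h
  have hE : ContDiff ℝ 1 (fun x : ℝ×ℝ =>
      ∫ y : ℝ×ℝ, w (x.2 - y.2) * (α * b (y.1 - x.1) + β * p (y.1 - x.1)) * g y) := by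
    have hk : ContDiff ℝ 1 (fun u : ℝ×ℝ => w u.2 * (α * b (-u.1) + β * p (-u.1))) :=
      (hw_smooth.comp contDiff_snd).mul
        ((contDiff_const.mul (hb_smooth.comp contDiff_fst.neg)).add
          (contDiff_const.mul (hp_smooth.comp contDiff_fst.neg)))
    have h := my_conv_smooth g _ hg1 hgcs hk
    have heq : (fun x : ℝ×ℝ =>
          ∫ y : ℝ×ℝ, w (x.2 - y.2) * (α * b (y.1 - x.1) + β * p (y.1 - x.1)) * g y)
        = fun x : ℝ×ℝ => ∫ y : ℝ×ℝ,
            g y * (fun u : ℝ×ℝ => w u.2 * (α * b (-u.1) + β * p (-u.1))) (x - y) := by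
      funext x
      refine integral_congr_ae (Filter.Eventually.of_forall fun y => ?_)
      show w (x.2 - y.2) * (α * b (y.1 - x.1) + β * p (y.1 - x.1)) * g y
        = g y * (w ((x - y).2) * (α * b (-(x - y).1) + β * p (-(x - y).1)))
      simp only [Prod.fst_sub, Prod.snd_sub, neg_sub]
      ring
    rw [heq]; exact h
  have hD : ContDiff ℝ 1 (fun x : ℝ×ℝ => ∫ y : ℝ×ℝ, w (x.2 - y.2) * g y) := by
    have hk : ContDiff ℝ 1 (fun u : ℝ×ℝ => w u.2) := hw_smooth.comp contDiff_snd
    have h := my_conv_smooth g _ hg1 hgcs hk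
    have heq : (fun x : ℝ×ℝ => ∫ y : ℝ×ℝ, w (x.2 - y.2) * g y)
        = fun x : ℝ×ℝ => ∫ y : ℝ×ℝ, g y * (fun u : ℝ×ℝ => w u.2) (x - y) := by
      funext x
      refine integral_congr_ae (Filter.Eventually.of_forall fun y => ?_)
      show w (x.2 - y.2) * g y = g y * w ((x - y).2)
      simp only [Prod.snd_sub]
      ring
    rw [heq]; exact h
  -- the three product functions
  have hP : ContDiff ℝ 1 (fun x : ℝ×ℝ =>
      (∫ y : ℝ×ℝ, w (x.2 - y.2) * (b (x.1 - y.1) - b (x.2 - y.2)) * g y) * g x) := hA.mul hg1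
  have hPsupp : Function.support (fun x : ℝ×ℝ =>
      (∫ y : ℝ×ℝ, w (x.2 - y.2) * (b (x.1 - y.1) - b (x.2 - y.2)) * g y) * g x) ⊆ K := by
    intro x hx
    refine hgK (Function.mem_support.mpr fun h0 => Function.mem_support.mp hx ?_)
    rw [h0, mul_zero]
  have hQ : ContDiff ℝ 1 (fun x : ℝ×ℝ =>
      (∫ y : ℝ×ℝ, w (x.2 - y.2) * (α * (1 + b (y.1 - x.1)) + β * p (y.1 - x.1)) * g y) * g x) :=
    hC.mul hg1
  have hQsupp : Function.support (fun x : ℝ×ℝ =>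
      (∫ y : ℝ×ℝ, w (x.2 - y.2) * (α * (1 + b (y.1 - x.1)) + β * p (y.1 - x.1)) * g y) * g x)
      ⊆ K := by
    intro x hx
    refine hgK (Function.mem_support.mpr fun h0 => Function.mem_support.mp hx ?_)
    rw [h0, mul_zero]
  have hc : Continuous (fun R : ℝ => σ2 / 2 * ∫ y : ℝ×ℝ, w (R - y.2) * g y) := by
    have h0 : Continuous (fun R : ℝ => (((0 : ℝ), R) : ℝ×ℝ)) :=
      continuous_const.prodMk continuous_id
    have h1 : Continuous (fun R : ℝ =>
        (fun x : ℝ×ℝ => ∫ y : ℝ×ℝ, w (x.2 - y.2) * g y) ((0, R) : ℝ×ℝ)) :=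
      hD.continuous.comp h0
    exact continuous_const.mul h1
  -- the three integral identities
  have hI1 : ∫ x : ℝ×ℝ, x.1 * deriv (fun r =>
      (∫ y : ℝ×ℝ, w (r - y.2) * (b (x.1 - y.1) - b (r - y.2)) * g y) * g (x.1, r)) x.2 = 0 :=
    my_int_deriv_snd_zero _ hP hK hPsupp
  have hi1 : Integrable (fun x : ℝ×ℝ => x.1 * deriv (fun r =>
      (∫ y : ℝ×ℝ, w (r - y.2) * (b (x.1 - y.1) - b (r - y.2)) * g y) * g (x.1, r)) x.2) :=
    my_int_deriv_snd_integrable _ hP hK hPsupp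
  have hI2 : ∫ x : ℝ×ℝ, x.1 * deriv (fun q =>
      (∫ y : ℝ×ℝ, w (x.2 - y.2) * (α * (1 + b (y.1 - q)) + β * p (y.1 - q)) * g y) *
        g (q, x.2)) x.1
      = - ∫ x : ℝ×ℝ,
          (∫ y : ℝ×ℝ, w (x.2 - y.2) * (α * (1 + b (y.1 - x.1)) + β * p (y.1 - x.1)) * g y) *
            g x :=
    my_int_deriv_fst_parts _ hQ hK hQsupp
  have hi2 : Integrable (fun x : ℝ×ℝ => x.1 * deriv (fun q =>
      (∫ y : ℝ×ℝ, w (x.2 - y.2) * (α * (1 + b (y.1 - q)) + β * p (y.1 - q)) * g y) *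
        g (q, x.2)) x.1) :=
    my_int_deriv_fst_integrable _ hQ hK hQsupp
  have hI3 : ∫ x : ℝ×ℝ, x.1 * (σ2 / 2 * (∫ y : ℝ×ℝ, w (x.2 - y.2) * g y) *
      deriv (deriv (fun q => g (q, x.2))) x.1) = 0 :=
    my_int_second_zero g hg2 hK hgK _ hc
  have hi3 : Integrable (fun x : ℝ×ℝ => x.1 * (σ2 / 2 * (∫ y : ℝ×ℝ, w (x.2 - y.2) * g y) *
      deriv (deriv (fun q => g (q, x.2))) x.1)) :=
    my_int_second_integrable g hg2 hK hgK _ hc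
  -- split the integral
  have hsplit : ∫ x : ℝ×ℝ, x.1 * ft x
      = ∫ x : ℝ×ℝ,
          (∫ y : ℝ×ℝ, w (x.2 - y.2) * (α * (1 + b (y.1 - x.1)) + β * p (y.1 - x.1)) * g y) *
            g x := by
    have hfeq : (fun x : ℝ×ℝ => x.1 * ft x)
        = fun x : ℝ×ℝ =>
          (-(x.1 * deriv (fun r =>
              (∫ y : ℝ×ℝ, w (r - y.2) * (b (x.1 - y.1) - b (r - y.2)) * g y) * g (x.1, r)) x.2)
          - x.1 * deriv (fun q =>
              (∫ y : ℝ×ℝ, w (x.2 - y.2) * (α * (1 + b (y.1 - q)) + β * p (y.1 - q)) * g y) *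
                g (q, x.2)) x.1)
          + x.1 * (σ2 / 2 * (∫ y : ℝ×ℝ, w (x.2 - y.2) * g y) *
              deriv (deriv (fun q => g (q, x.2))) x.1) := by
      funext x
      rw [hft x]
      ring
    have hi1' : Integrable (fun x : ℝ×ℝ => -(x.1 * deriv (fun r =>
        (∫ y : ℝ×ℝ, w (r - y.2) * (b (x.1 - y.1) - b (r - y.2)) * g y) * g (x.1, r)) x.2)) :=
      hi1.neg
    have hi12 : Integrable (fun x : ℝ×ℝ =>
        -(x.1 * deriv (fun r =>
            (∫ y : ℝ×ℝ, w (r - y.2) * (b (x.1 - y.1) - b (r - y.2)) * g y) * g (x.1, r)) x.2)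
        - x.1 * deriv (fun q =>
            (∫ y : ℝ×ℝ, w (x.2 - y.2) * (α * (1 + b (y.1 - q)) + β * p (y.1 - q)) * g y) *
              g (q, x.2)) x.1) := hi1'.sub hi2
    rw [hfeq, integral_add hi12 hi3, integral_sub hi1' hi2, integral_neg, hI1, hI2, hI3]
    ring
  rw [hsplit]
  -- split the kernel into the even gain part and the odd part
  have hDg_int : Integrable (fun x : ℝ×ℝ => (∫ y : ℝ×ℝ, w (x.2 - y.2) * g y) * g x) := by
    apply my_integrable_of_support _ (hD.continuous.mul hgc) hK
    intro x hx
    refine hgK (Function.mem_support.mpr fun h0 => Function.mem_support.mp hx ?_)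
    rw [Pi.mul_apply, h0, mul_zero]
  have hEg_int : Integrable (fun x : ℝ×ℝ =>
      (∫ y : ℝ×ℝ, w (x.2 - y.2) * (α * b (y.1 - x.1) + β * p (y.1 - x.1)) * g y) * g x) := by
    apply my_integrable_of_support _ (hE.continuous.mul hgc) hK
    intro x hx
    refine hgK (Function.mem_support.mpr fun h0 => Function.mem_support.mp hx ?_)
    rw [Pi.mul_apply, h0, mul_zero]
  have hker : ∀ x : ℝ×ℝ,
      (∫ y : ℝ×ℝ, w (x.2 - y.2) * (α * (1 + b (y.1 - x.1)) + β * p (y.1 - x.1)) * g y)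
        = α * (∫ y : ℝ×ℝ, w (x.2 - y.2) * g y)
          + ∫ y : ℝ×ℝ, w (x.2 - y.2) * (α * b (y.1 - x.1) + β * p (y.1 - x.1)) * g y := by
    intro x
    have h1 : Integrable (fun y : ℝ×ℝ => α * (w (x.2 - y.2) * g y)) := by
      apply Integrable.const_mul
      apply my_integrable_of_support _ ((hw_smooth.continuous.comp
        (continuous_const.sub continuous_snd)).mul hgc) hK
      intro y hy
      refine hgK (Function.mem_support.mpr fun h0 => Function.mem_support.mp hy ?_)
      rw [Pi.mul_apply, h0, mul_zero]
    have h2 : Integrable (fun y : ℝ×ℝ =>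
        w (x.2 - y.2) * (α * b (y.1 - x.1) + β * p (y.1 - x.1)) * g y) := by
      apply my_integrable_of_support _ (((hw_smooth.continuous.comp
        (continuous_const.sub continuous_snd)).mul
          ((continuous_const.mul (hb_smooth.continuous.comp
            (continuous_fst.sub continuous_const))).add
           (continuous_const.mul (hp_smooth.continuous.comp
            (continuous_fst.sub continuous_const))))).mul hgc) hK
      intro y hy
      refine hgK (Function.mem_support.mpr fun h0 => Function.mem_support.mp hy ?_)
      rw [Pi.mul_apply, h0, mul_zero]
    calc (∫ y : ℝ×ℝ, w (x.2 - y.2) * (α * (1 + b (y.1 - x.1)) + β * p (y.1 - x.1)) * g y)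
        = ∫ y : ℝ×ℝ, (α * (w (x.2 - y.2) * g y)
            + w (x.2 - y.2) * (α * b (y.1 - x.1) + β * p (y.1 - x.1)) * g y) :=
          integral_congr_ae (Filter.Eventually.of_forall fun y => by ring)
      _ = (∫ y : ℝ×ℝ, α * (w (x.2 - y.2) * g y))
            + ∫ y : ℝ×ℝ, w (x.2 - y.2) * (α * b (y.1 - x.1) + β * p (y.1 - x.1)) * g y :=
          integral_add h1 h2
      _ = α * (∫ y : ℝ×ℝ, w (x.2 - y.2) * g y)
            + ∫ y : ℝ×ℝ, w (x.2 - y.2) * (α * b (y.1 - x.1) + β * p (y.1 - x.1)) * g y := by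
          rw [integral_const_mul]
  -- the odd part integrates to zero by symmetrisation
  have hodd : ∫ x : ℝ×ℝ,
      (∫ y : ℝ×ℝ, w (x.2 - y.2) * (α * b (y.1 - x.1) + β * p (y.1 - x.1)) * g y) * g x = 0 := by
    have hGcont : Continuous (fun z : (ℝ×ℝ)×(ℝ×ℝ) =>
        w (z.1.2 - z.2.2) * (α * b (z.2.1 - z.1.1) + β * p (z.2.1 - z.1.1)) * g z.2 * g z.1) := by
      refine Continuous.mul (Continuous.mul (Continuous.mul ?_ ?_) (hgc.comp continuous_snd))
        (hgc.comp continuous_fst)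
      · exact hw_smooth.continuous.comp (continuous_fst.snd.sub continuous_snd.snd)
      · exact (continuous_const.mul (hb_smooth.continuous.comp
          (continuous_snd.fst.sub continuous_fst.fst))).add
          (continuous_const.mul (hp_smooth.continuous.comp
            (continuous_snd.fst.sub continuous_fst.fst)))
    have hGi : Integrable (fun z : (ℝ×ℝ)×(ℝ×ℝ) =>
        w (z.1.2 - z.2.2) * (α * b (z.2.1 - z.1.1) + β * p (z.2.1 - z.1.1)) * g z.2 * g z.1)
        ((volume : Measure (ℝ×ℝ)).prod (volume : Measure (ℝ×ℝ))) := by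
      apply my_integrable_of_support4 _ hGcont (hK.prod hK)
      intro z hz
      have hz' := Function.mem_support.mp hz
      constructor
      · refine hgK (Function.mem_support.mpr fun h0 => hz' ?_)
        rw [h0, mul_zero]
      · refine hgK (Function.mem_support.mpr fun h0 => hz' ?_)
        rw [h0, mul_zero, zero_mul]
    have hanti : ∀ x y : ℝ×ℝ,
        w (y.2 - x.2) * (α * b (x.1 - y.1) + β * p (x.1 - y.1)) * g x * g y
          = -(w (x.2 - y.2) * (α * b (y.1 - x.1) + β * p (y.1 - x.1)) * g y * g x) := by
      intro x y
      rw [show y.2 - x.2 = -(x.2 - y.2) by ring, hw_even,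
        show x.1 - y.1 = -(y.1 - x.1) by ring, hb_odd, hp_odd]
      ring
    have hzero := my_antisym
      (fun x y : ℝ×ℝ => w (x.2 - y.2) * (α * b (y.1 - x.1) + β * p (y.1 - x.1)) * g y * g x)
      (by exact hGi) hanti
    calc ∫ x : ℝ×ℝ,
        (∫ y : ℝ×ℝ, w (x.2 - y.2) * (α * b (y.1 - x.1) + β * p (y.1 - x.1)) * g y) * g x
        = ∫ x : ℝ×ℝ, ∫ y : ℝ×ℝ,
            w (x.2 - y.2) * (α * b (y.1 - x.1) + β * p (y.1 - x.1)) * g y * g x :=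
          integral_congr_ae (Filter.Eventually.of_forall fun x =>
            (integral_mul_const _ _).symm)
      _ = 0 := hzero
  calc ∫ x : ℝ×ℝ,
      (∫ y : ℝ×ℝ, w (x.2 - y.2) * (α * (1 + b (y.1 - x.1)) + β * p (y.1 - x.1)) * g y) * g x
      = ∫ x : ℝ×ℝ,
          (α * ((∫ y : ℝ×ℝ, w (x.2 - y.2) * g y) * g x)
          + (∫ y : ℝ×ℝ, w (x.2 - y.2) * (α * b (y.1 - x.1) + β * p (y.1 - x.1)) * g y) * g x) :=
        integral_congr_ae (Filter.Eventually.of_forall fun x => by simp only [hker x]; ring)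
    _ = (∫ x : ℝ×ℝ, α * ((∫ y : ℝ×ℝ, w (x.2 - y.2) * g y) * g x))
        + ∫ x : ℝ×ℝ,
          (∫ y : ℝ×ℝ, w (x.2 - y.2) * (α * b (y.1 - x.1) + β * p (y.1 - x.1)) * g y) * g x :=
        integral_add (hDg_int.const_mul α) hEg_int
    _ = α * ∫ x : ℝ×ℝ, (∫ y : ℝ×ℝ, w (x.2 - y.2) * g y) * g x := by
        rw [integral_const_mul, hodd, add_zero]
/-- Evolution of the mean intrinsic strength for classical, compactly supported
solutions of the nonlinear nonlocal Fokker-Planck Elo equation with learning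
kernel `α(1 + b) + β p`: the odd parts cancel and
`d/dt ∫ ρ f = α ∫∫ w(R - R') f f'`. -/
theorem elo_fokker_planck_mean_strength_evolution
    (σ2 T α β : ℝ) (hσ : 0 ≤ σ2) (hT : 0 < T) (hα : 0 ≤ α) (hβ : 0 ≤ β)
    (w b p : ℝ → ℝ)
    (hw_even : ∀ z, w (-z) = w z) (hw_smooth : ContDiff ℝ 1 w)
    (Cw : ℝ) (hw_bdd : ∀ z, |w z| ≤ Cw)
    (hb_odd : ∀ z, b (-z) = -b z) (hb_smooth : ContDiff ℝ 1 b)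
    (Cb : ℝ) (hb_bdd : ∀ z, |b z| ≤ Cb)
    (hp_odd : ∀ z, p (-z) = -p z) (hp_smooth : ContDiff ℝ 1 p)
    (Cp : ℝ) (hp_bdd : ∀ z, |p z| ≤ Cp)
    (f : ℝ → ℝ → ℝ → ℝ)  -- arguments: ρ, R, t
    (hf_nonneg : ∀ ρ R t, 0 ≤ f ρ R t)
    (hf_C1 : ContDiff ℝ 1 (fun q : ℝ × ℝ × ℝ => f q.1 q.2.1 q.2.2))
    (hf_C2 : ∀ t, ContDiff ℝ 2 (fun x : ℝ × ℝ => f x.1 x.2 t))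
    (K : Set (ℝ × ℝ)) (hK : IsCompact K)
    (hsupp : ∀ t ∈ Set.Icc (0 : ℝ) T,
      Function.support (fun x : ℝ × ℝ => f x.1 x.2 t) ⊆ K)
    (hpde : ∀ (ρ R t : ℝ), 0 < t → t < T →
      deriv (fun s => f ρ R s) t
        = -(deriv (fun r =>
              (∫ y : ℝ × ℝ, w (r - y.2) * (b (ρ - y.1) - b (r - y.2)) *
                f y.1 y.2 t) * f ρ r t) R)
          - deriv (fun q =>
              (∫ y : ℝ × ℝ, w (R - y.2) *
                  (α * (1 + b (y.1 - q)) + β * p (y.1 - q)) * f y.1 y.2 t) *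
                f q R t) ρ
          + σ2 / 2 * (∫ y : ℝ × ℝ, w (R - y.2) * f y.1 y.2 t) *
              deriv (deriv (fun q => f q R t)) ρ) :
    ∀ t : ℝ, 0 < t → t < T →
      deriv (fun s => ∫ x : ℝ × ℝ, x.1 * f x.1 x.2 s) t
        = α * ∫ x : ℝ × ℝ, (∫ y : ℝ × ℝ, w (x.2 - y.2) * f y.1 y.2 t) *
            f x.1 x.2 t := by
  intro t ht0 htT
  have hF3d : Differentiable ℝ (fun q : ℝ×ℝ×ℝ => f q.1 q.2.1 q.2.2) :=
    hf_C1.differentiable one_ne_zero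
  have hfd : Continuous (fderiv ℝ (fun q : ℝ×ℝ×ℝ => f q.1 q.2.1 q.2.2)) :=
    hf_C1.continuous_fderiv one_ne_zero
  have hline : ∀ (ρ R s : ℝ), HasDerivAt (fun s' => f ρ R s')
      (fderiv ℝ (fun q : ℝ×ℝ×ℝ => f q.1 q.2.1 q.2.2) (ρ, R, s)
        (((0:ℝ), (0:ℝ), (1:ℝ)) : ℝ×ℝ×ℝ)) s := by
    intro ρ R s
    have h1 : HasDerivAt (fun s' : ℝ => ((ρ, R, s') : ℝ×ℝ×ℝ))
        ((((0:ℝ), (0:ℝ), (1:ℝ))) : ℝ×ℝ×ℝ) s :=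
      (hasDerivAt_const s ρ).prodMk ((hasDerivAt_const s R).prodMk (hasDerivAt_id s))
    exact (hF3d (ρ, R, s)).hasFDerivAt.comp_hasDerivAt s h1
  obtain ⟨M1, hM1⟩ := hK.exists_bound_of_continuousOn
    (continuous_fst.continuousOn : ContinuousOn (fun x : ℝ×ℝ => x.1) K)
  have hScomp : IsCompact ((fun z : (ℝ×ℝ)×ℝ => ((z.1.1, z.1.2, z.2) : ℝ×ℝ×ℝ)) ''
      (K ×ˢ Set.Icc (0:ℝ) T)) :=
    (hK.prod isCompact_Icc).image (by fun_prop)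
  obtain ⟨M2, hM2⟩ := hScomp.exists_bound_of_continuousOn hfd.continuousOn
  have hε : 0 < min t (T - t) := lt_min ht0 (by linarith)
  have hball : ∀ s ∈ Metric.ball t (min t (T - t)), 0 < s ∧ s < T := by
    intro s hs
    rw [Metric.mem_ball, Real.dist_eq] at hs
    have h1 := abs_lt.mp hs
    have h2 := min_le_left t (T - t)
    have h3 := min_le_right t (T - t)
    constructor <;> linarith [h1.1, h1.2]
  have hnorm : ‖((((0:ℝ), (0:ℝ), (1:ℝ))) : ℝ×ℝ×ℝ)‖ = 1 := by
    norm_num [Prod.norm_def]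
  have hF_meas : ∀ᶠ s in nhds t,
      AEStronglyMeasurable (fun x : ℝ×ℝ => x.1 * f x.1 x.2 s) volume :=
    Filter.Eventually.of_forall fun s =>
      (continuous_fst.mul (hf_C2 s).continuous).aestronglyMeasurable
  have hF_int : Integrable (fun x : ℝ×ℝ => x.1 * f x.1 x.2 t) := by
    apply my_integrable_of_support _ (continuous_fst.mul (hf_C2 t).continuous) hK
    intro x hx
    refine hsupp t ⟨ht0.le, htT.le⟩ (Function.mem_support.mpr fun h0 =>
      Function.mem_support.mp hx ?_)
    show x.1 * f x.1 x.2 t = 0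
    rw [show f x.1 x.2 t = 0 from h0, mul_zero]
  have hF'_meas : AEStronglyMeasurable (fun x : ℝ×ℝ =>
      x.1 * fderiv ℝ (fun q : ℝ×ℝ×ℝ => f q.1 q.2.1 q.2.2) (x.1, x.2, t)
        (((0:ℝ), (0:ℝ), (1:ℝ)) : ℝ×ℝ×ℝ)) volume := by
    have hmap : Continuous (fun x : ℝ×ℝ => ((x.1, x.2, t) : ℝ×ℝ×ℝ)) := by fun_prop
    exact (continuous_fst.mul ((hfd.comp hmap).clm_apply continuous_const)).aestronglyMeasurable
  have h_bound : ∀ᵐ x ∂(volume : Measure (ℝ×ℝ)), ∀ s ∈ Metric.ball t (min t (T - t)),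
      ‖x.1 * fderiv ℝ (fun q : ℝ×ℝ×ℝ => f q.1 q.2.1 q.2.2) (x.1, x.2, s)
        (((0:ℝ), (0:ℝ), (1:ℝ)) : ℝ×ℝ×ℝ)‖ ≤ K.indicator (fun _ => M1 * M2) x := by
    refine Filter.Eventually.of_forall fun x s hs => ?_
    by_cases hx : x ∈ K
    · rw [Set.indicator_of_mem hx, norm_mul]
      have hsI : s ∈ Set.Icc (0:ℝ) T := ⟨(hball s hs).1.le, (hball s hs).2.le⟩
      have h1 : ‖fderiv ℝ (fun q : ℝ×ℝ×ℝ => f q.1 q.2.1 q.2.2) (x.1, x.2, s)‖ ≤ M2 :=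
        hM2 _ ⟨(x, s), ⟨hx, hsI⟩, rfl⟩
      have h2 := ContinuousLinearMap.le_opNorm
        (fderiv ℝ (fun q : ℝ×ℝ×ℝ => f q.1 q.2.1 q.2.2) (x.1, x.2, s))
        ((((0:ℝ), (0:ℝ), (1:ℝ))) : ℝ×ℝ×ℝ)
      rw [hnorm, mul_one] at h2
      exact mul_le_mul (hM1 x hx) (h2.trans h1) (norm_nonneg _)
        ((norm_nonneg x.1).trans (hM1 x hx))
    · rw [Set.indicator_of_notMem hx]
      have hU : IsOpen {q : ℝ×ℝ×ℝ | (q.1, q.2.1) ∉ K ∧ q.2.2 ∈ Set.Ioo (0:ℝ) T} := by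
        have he : {q : ℝ×ℝ×ℝ | (q.1, q.2.1) ∉ K ∧ q.2.2 ∈ Set.Ioo (0:ℝ) T}
            = ((fun q : ℝ×ℝ×ℝ => ((q.1, q.2.1) : ℝ×ℝ)) ⁻¹' Kᶜ)
              ∩ ((fun q : ℝ×ℝ×ℝ => q.2.2) ⁻¹' Set.Ioo (0:ℝ) T) := rfl
        rw [he]
        exact (hK.isClosed.isOpen_compl.preimage (by fun_prop)).inter
          (isOpen_Ioo.preimage (by fun_prop))
      have hmem : ((x.1, x.2, s) : ℝ×ℝ×ℝ) ∈
          {q : ℝ×ℝ×ℝ | (q.1, q.2.1) ∉ K ∧ q.2.2 ∈ Set.Ioo (0:ℝ) T} := by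
        refine ⟨?_, (hball s hs).1, (hball s hs).2⟩
        simpa using hx
      have hzero : (fun q : ℝ×ℝ×ℝ => f q.1 q.2.1 q.2.2)
          =ᶠ[nhds ((x.1, x.2, s) : ℝ×ℝ×ℝ)] fun _ => (0:ℝ) := by
        filter_upwards [hU.mem_nhds hmem] with q hq
        by_contra h0
        exact hq.1 (hsupp q.2.2 ⟨hq.2.1.le, hq.2.2.le⟩ (Function.mem_support.mpr h0))
      have h0 : fderiv ℝ (fun q : ℝ×ℝ×ℝ => f q.1 q.2.1 q.2.2) (x.1, x.2, s) = 0 := by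
        rw [hzero.fderiv_eq]
        exact fderiv_const_apply 0
      rw [h0]
      simp
  have bound_int : Integrable (K.indicator fun _ => M1 * M2) (volume : Measure (ℝ×ℝ)) :=
    (integrable_indicator_iff hK.isClosed.measurableSet).2
      (integrableOn_const hK.measure_lt_top.ne)
  have h_diff : ∀ᵐ x ∂(volume : Measure (ℝ×ℝ)), ∀ s ∈ Metric.ball t (min t (T - t)),
      HasDerivAt (fun s' => x.1 * f x.1 x.2 s')
        (x.1 * fderiv ℝ (fun q : ℝ×ℝ×ℝ => f q.1 q.2.1 q.2.2) (x.1, x.2, s)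
          (((0:ℝ), (0:ℝ), (1:ℝ)) : ℝ×ℝ×ℝ)) s :=
    Filter.Eventually.of_forall fun x s _ => (hline x.1 x.2 s).const_mul x.1
  have key := hasDerivAt_integral_of_dominated_loc_of_deriv_le
    (μ := (volume : Measure (ℝ×ℝ)))
    (F := fun (s : ℝ) (x : ℝ×ℝ) => x.1 * f x.1 x.2 s)
    (F' := fun (s : ℝ) (x : ℝ×ℝ) =>
      x.1 * fderiv ℝ (fun q : ℝ×ℝ×ℝ => f q.1 q.2.1 q.2.2) (x.1, x.2, s)
        (((0:ℝ), (0:ℝ), (1:ℝ)) : ℝ×ℝ×ℝ))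
    (bound := K.indicator fun _ => M1 * M2)
    (Metric.ball_mem_nhds t hε) hF_meas hF_int hF'_meas h_bound bound_int h_diff
  rw [key.2.deriv]
  exact my_space_step σ2 α β w b p hw_even hw_smooth hb_odd hb_smooth hp_odd hp_smooth
    (fun x : ℝ×ℝ => f x.1 x.2 t) (hf_C2 t) K hK (hsupp t ⟨ht0.le, htT.le⟩)
    (fun x : ℝ×ℝ => fderiv ℝ (fun q : ℝ×ℝ×ℝ => f q.1 q.2.1 q.2.2) (x.1, x.2, t)
      (((0:ℝ), (0:ℝ), (1:ℝ)) : ℝ×ℝ×ℝ))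
    (fun x => by
      show fderiv ℝ (fun q : ℝ×ℝ×ℝ => f q.1 q.2.1 q.2.2) (x.1, x.2, t)
        (((0:ℝ), (0:ℝ), (1:ℝ)) : ℝ×ℝ×ℝ) = _
      rw [← (hline x.1 x.2 t).deriv]
      exact hpde x.1 x.2 t ht0 htT)
end
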